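/- arXiv:2005.12601 — 5 statements merged into one kernel-verified Lean document; each statement's English description precedes it below -/
import Mathlib

section
/- Let v₁,…,v_{j₀} be orthonormal vectors in ℝ^{j*} with j₀ ≥ j*/2 − 1 and j₀ ≥ j*/3, and let ξ₁,…,ξ_{j₀} be i.i.d. Rademacher random variables. Define δ_ξ^j = Σ_{k=1}^{j₀} ξ_k v_{kj}. Then E[ Σ_{j=1}^{j*} |δ_ξ^j| ] ≥ j*/(24√2), provided j₀ ≥ j*/2 − 1. -/
open Real Finset

namespace Stmt1Aux

def r (b : Bool) : ℝ := if b then 1 else -1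

lemma sum_r_pow (m : ℕ) : ∑ b : Bool, r b ^ m = if Even m then 2 else 0 := by
  rcases Nat.even_or_odd m with h | h
  · simp [r, Fintype.sum_bool, h.neg_one_pow, if_pos h]
  · simp [r, Fintype.sum_bool, h.neg_one_pow, Nat.not_even_iff_odd.mpr h]

variable {n : ℕ}

lemma moment (m : Fin n → ℕ) :
    ∑ ε : Fin n → Bool, ∏ i, r (ε i) ^ m i = if (∀ i, Even (m i)) then (2:ℝ)^n else 0 := by
  classical
  have h := Finset.prod_univ_sum (fun _ : Fin n => (Finset.univ : Finset Bool))
      (fun i b => r b ^ m i)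
  rw [Fintype.piFinset_univ] at h
  rw [← h]
  by_cases hc : ∀ i, Even (m i)
  · rw [if_pos hc, Finset.prod_congr rfl (fun i _ => by rw [sum_r_pow, if_pos (hc i)])]
    simp
  · rw [if_neg hc]
    push_neg at hc
    obtain ⟨i, hi⟩ := hc
    exact Finset.prod_eq_zero (mem_univ i) (by rw [sum_r_pow, if_neg hi])

lemma prod_ind (ε : Fin n → Bool) (k : Fin n) :
    ∏ i, r (ε i) ^ (if i = k then 1 else 0) = r (ε k) := by
  have : ∀ i, r (ε i) ^ (if i = k then 1 else 0) = if i = k then r (ε i) else 1 := by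
    intro i; by_cases h : i = k <;> simp [h]
  simp_rw [this, Finset.prod_ite_eq' Finset.univ k (fun i => r (ε i)), if_pos (mem_univ k)]


lemma E2 (k l : Fin n) :
    ∑ ε : Fin n → Bool, r (ε k) * r (ε l) = if k = l then (2:ℝ)^n else 0 := by
  have key : ∀ ε : Fin n → Bool, r (ε k) * r (ε l)
      = ∏ i, r (ε i) ^ ((if i = k then 1 else 0) + (if i = l then 1 else 0)) := by
    intro ε
    simp_rw [pow_add, Finset.prod_mul_distrib, prod_ind]
  simp_rw [key, moment]
  have hiff : (∀ i : Fin n, Even ((if i = k then 1 else 0) + (if i = l then 1 else 0))) ↔ k = l := by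
    constructor
    · intro h
      by_contra hkl
      have := h k
      simp [hkl] at this
    · rintro rfl i
      by_cases h : i = k <;> simp [h]
  simp [hiff]

lemma E4 {k l k' l' : Fin n} (hkl : k ≠ l) (hkl' : k' ≠ l') :
    ∑ ε : Fin n → Bool, r (ε k) * r (ε l) * (r (ε k') * r (ε l'))
      = if (k = k' ∧ l = l') ∨ (k = l' ∧ l = k') then (2:ℝ)^n else 0 := by
  have key : ∀ ε : Fin n → Bool, r (ε k) * r (ε l) * (r (ε k') * r (ε l'))
      = ∏ i, r (ε i) ^ ((if i = k then 1 else 0) + (if i = l then 1 else 0)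
          + ((if i = k' then 1 else 0) + (if i = l' then 1 else 0))) := by
    intro ε
    simp_rw [pow_add, Finset.prod_mul_distrib, prod_ind]
  simp_rw [key, moment]
  have hiff : (∀ i : Fin n, Even ((if i = k then 1 else 0) + (if i = l then 1 else 0)
          + ((if i = k' then 1 else 0) + (if i = l' then 1 else 0))))
      ↔ ((k = k' ∧ l = l') ∨ (k = l' ∧ l = k')) := by
    constructor
    · intro h
      have h1 := h k
      have h2 := h l
      by_cases e1 : k = k' <;> by_cases e2 : k = l' <;> by_cases e3 : l = k' <;>
        by_cases e4 : l = l' <;>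
        simp_all [hkl, hkl', Nat.even_add] <;> omega
    · rintro (⟨rfl, rfl⟩ | ⟨rfl, rfl⟩) i <;>
        [skip; skip] <;>
      · by_cases h1 : i = k <;> by_cases h2 : i = l <;> simp_all [Nat.even_add]
  simp [hiff]

noncomputable def Z (a : Fin n → ℝ) (ε : Fin n → Bool) : ℝ :=
  ∑ p ∈ (univ : Finset (Fin n)).offDiag, a p.1 * a p.2 * (r (ε p.1) * r (ε p.2))

lemma sq_eq (a : Fin n → ℝ) (ε : Fin n → Bool) :
    (∑ k, r (ε k) * a k) ^ 2 = (∑ k, a k ^ 2) + Z a ε := by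
  have h1 : (∑ k, r (ε k) * a k) ^ 2
      = ∑ p ∈ (univ : Finset (Fin n)) ×ˢ univ, a p.1 * a p.2 * (r (ε p.1) * r (ε p.2)) := by
    rw [sq, Finset.sum_mul_sum, Finset.sum_product]
    refine Finset.sum_congr rfl fun k _ => Finset.sum_congr rfl fun l _ => by ring
  rw [h1, ← Finset.diag_union_offDiag (univ : Finset (Fin n)),
    Finset.sum_union (Finset.disjoint_diag_offDiag _), Finset.sum_diag]
  congr 1
  · refine Finset.sum_congr rfl fun k _ => ?_
    have h2 : r (ε k) ^ 2 = 1 := by cases ε k <;> simp [r]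
    ring_nf
    rw [h2, mul_one]

lemma sum_Z (a : Fin n → ℝ) : ∑ ε : Fin n → Bool, Z a ε = 0 := by
  unfold Z
  rw [Finset.sum_comm]
  refine Finset.sum_eq_zero fun p hp => ?_
  rw [← Finset.mul_sum, E2, if_neg (Finset.mem_offDiag.mp hp).2.2, mul_zero]

lemma sum_Z_sq (a : Fin n → ℝ) :
    ∑ ε : Fin n → Bool, (Z a ε) ^ 2 ≤ 2 * 2 ^ n * (∑ k, a k ^ 2) ^ 2 := by
  have key : ∑ ε : Fin n → Bool, (Z a ε) ^ 2
      = ∑ p ∈ (univ : Finset (Fin n)).offDiag,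
          ∑ q ∈ (univ : Finset (Fin n)).offDiag,
            (a p.1 * a p.2) * (a q.1 * a q.2) *
              (if (p.1 = q.1 ∧ p.2 = q.2) ∨ (p.1 = q.2 ∧ p.2 = q.1) then (2:ℝ)^n else 0) := by
    have expand : ∀ ε, (Z a ε) ^ 2 = ∑ p ∈ (univ : Finset (Fin n)).offDiag,
        ∑ q ∈ (univ : Finset (Fin n)).offDiag,
          (a p.1 * a p.2) * (a q.1 * a q.2) *
            (r (ε p.1) * r (ε p.2) * (r (ε q.1) * r (ε q.2))) := by
      intro ε
      rw [Z, sq, Finset.sum_mul_sum]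
      refine Finset.sum_congr rfl fun p _ => Finset.sum_congr rfl fun q _ => by ring
    simp_rw [expand]
    rw [Finset.sum_comm]
    refine Finset.sum_congr rfl fun p hp => ?_
    rw [Finset.sum_comm]
    refine Finset.sum_congr rfl fun q hq => ?_
    rw [← Finset.mul_sum, E4 (Finset.mem_offDiag.mp hp).2.2 (Finset.mem_offDiag.mp hq).2.2]
  rw [key]
  have step : ∀ p ∈ (univ : Finset (Fin n)).offDiag,
      (∑ q ∈ (univ : Finset (Fin n)).offDiag,
        (a p.1 * a p.2) * (a q.1 * a q.2) *
          (if (p.1 = q.1 ∧ p.2 = q.2) ∨ (p.1 = q.2 ∧ p.2 = q.1) then (2:ℝ)^n else 0))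
      = 2 * 2^n * (a p.1 * a p.2)^2 := by
    intro p hp
    have hp' := Finset.mem_offDiag.mp hp
    have hcond : ∀ q : Fin n × Fin n,
        ((p.1 = q.1 ∧ p.2 = q.2) ∨ (p.1 = q.2 ∧ p.2 = q.1)) ↔ (q = p ∨ q = p.swap) := by
      intro q
      constructor
      · rintro (⟨h1, h2⟩ | ⟨h1, h2⟩)
        · left; ext <;> simp [← h1, ← h2]
        · right; ext <;> simp [Prod.swap, ← h1, ← h2]
      · rintro (rfl | rfl) <;> simp
    have : ∀ q : Fin n × Fin n,
        (a p.1 * a p.2) * (a q.1 * a q.2) *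
          (if (p.1 = q.1 ∧ p.2 = q.2) ∨ (p.1 = q.2 ∧ p.2 = q.1) then (2:ℝ)^n else 0)
        = if q = p ∨ q = p.swap then (a p.1 * a p.2) * (a q.1 * a q.2) * (2:ℝ)^n else 0 := by
      intro q
      by_cases h : (p.1 = q.1 ∧ p.2 = q.2) ∨ (p.1 = q.2 ∧ p.2 = q.1)
      · rw [if_pos h, if_pos ((hcond q).mp h)]
      · rw [if_neg h, if_neg (fun hh => h ((hcond q).mpr hh)), mul_zero]
    simp_rw [this]
    rw [Finset.sum_ite, Finset.sum_const_zero, add_zero]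
    have hfilter : (univ : Finset (Fin n)).offDiag.filter (fun q => q = p ∨ q = p.swap)
        = {p, p.swap} := by
      ext q
      simp only [Finset.mem_filter, Finset.mem_insert, Finset.mem_singleton]
      constructor
      · rintro ⟨_, h⟩; exact h
      · rintro (rfl | rfl)
        · exact ⟨hp, Or.inl rfl⟩
        · refine ⟨?_, Or.inr rfl⟩
          simp only [Finset.mem_offDiag] at hp' ⊢
          exact ⟨mem_univ _, mem_univ _, Ne.symm hp'.2.2⟩
    rw [hfilter, Finset.sum_pair]
    · simp [Prod.swap]
      ring
    · intro h
      apply hp'.2.2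
      have := congrArg Prod.fst h
      simp at this
      exact this
  rw [Finset.sum_congr rfl step]
  rw [← Finset.mul_sum]
  have hsub : ∑ p ∈ (univ : Finset (Fin n)).offDiag, (a p.1 * a p.2)^2
      ≤ (∑ k, a k ^ 2) ^ 2 := by
    have : (∑ k, a k ^ 2) ^ 2 = ∑ p ∈ (univ : Finset (Fin n)) ×ˢ univ, (a p.1 * a p.2)^2 := by
      rw [sq, Finset.sum_mul_sum, Finset.sum_product]
      exact Finset.sum_congr rfl fun k _ => Finset.sum_congr rfl fun l _ => by ring
    rw [this]
    exact Finset.sum_le_sum_of_subset_of_nonneg (fun x hx => Finset.mem_product.mpr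
        ⟨(Finset.mem_offDiag.mp hx).1, (Finset.mem_offDiag.mp hx).2.1⟩)
      (fun _ _ _ => sq_nonneg _)
  calc 2 * 2^n * ∑ p ∈ (univ : Finset (Fin n)).offDiag, (a p.1 * a p.2)^2
      ≤ 2 * 2^n * (∑ k, a k ^ 2)^2 := by
        apply mul_le_mul_of_nonneg_left hsub
        positivity

lemma card_eps : (Finset.univ : Finset (Fin n → Bool)).card = 2 ^ n := by
  simp [Finset.card_univ]

lemma sum_sq (a : Fin n → ℝ) :
    ∑ ε : Fin n → Bool, (∑ k, r (ε k) * a k) ^ 2 = 2 ^ n * ∑ k, a k ^ 2 := by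
  simp_rw [sq_eq a]
  rw [Finset.sum_add_distrib, sum_Z, add_zero, Finset.sum_const, card_eps, nsmul_eq_mul]
  push_cast
  ring

lemma sum_pow4 (a : Fin n → ℝ) :
    ∑ ε : Fin n → Bool, (∑ k, r (ε k) * a k) ^ 4 ≤ 3 * 2 ^ n * (∑ k, a k ^ 2) ^ 2 := by
  have h4 : ∀ ε : Fin n → Bool, (∑ k, r (ε k) * a k) ^ 4
      = ((∑ k, a k ^ 2) + Z a ε) ^ 2 := by
    intro ε; rw [← sq_eq a ε]; ring
  simp_rw [h4, add_sq]
  rw [Finset.sum_add_distrib, Finset.sum_add_distrib, Finset.sum_const, card_eps,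
    nsmul_eq_mul, ← Finset.mul_sum, sum_Z, mul_zero]
  have := sum_Z_sq a
  push_cast
  nlinarith [sq_nonneg (∑ k, a k ^ 2)]

lemma khint (a : Fin n → ℝ) (hle : ∑ k, a k ^ 2 ≤ 1) :
    ∑ ε : Fin n → Bool, |∑ k, r (ε k) * a k| ≥ 2 ^ n * (∑ k, a k ^ 2) / Real.sqrt 3 := by
  set s : ℝ := ∑ k, a k ^ 2 with hs
  have hs0 : 0 ≤ s := Finset.sum_nonneg fun _ _ => sq_nonneg _
  rcases eq_or_lt_of_le hs0 with h0 | hpos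
  · rw [← h0, mul_zero, zero_div]
    exact Finset.sum_nonneg fun _ _ => abs_nonneg _
  set X : (Fin n → Bool) → ℝ := fun ε => ∑ k, r (ε k) * a k with hX
  set S1 : ℝ := ∑ ε : Fin n → Bool, |X ε| with hS1
  set S3 : ℝ := ∑ ε : Fin n → Bool, X ε ^ 2 * |X ε| with hS3
  have hS1nn : 0 ≤ S1 := Finset.sum_nonneg fun _ _ => abs_nonneg _
  have hS3nn : 0 ≤ S3 := Finset.sum_nonneg fun _ _ => mul_nonneg (sq_nonneg _) (abs_nonneg _)
  have hT : ∑ ε : Fin n → Bool, X ε ^ 2 = 2 ^ n * s := sum_sq a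
  have hU : ∑ ε : Fin n → Bool, X ε ^ 4 ≤ 3 * 2 ^ n * s ^ 2 := sum_pow4 a
  have hUnn : 0 ≤ ∑ ε : Fin n → Bool, X ε ^ 4 :=
    Finset.sum_nonneg fun _ _ => by positivity
  -- CS1 : (∑ X²)² ≤ S1 * S3
  have hCS1 : (∑ ε : Fin n → Bool, X ε ^ 2) ^ 2 ≤ S1 * S3 := by
    have h := Finset.sum_mul_sq_le_sq_mul_sq Finset.univ
      (fun ε => Real.sqrt |X ε|) (fun ε => |X ε| * Real.sqrt |X ε|)
    have e1 : ∀ ε : Fin n → Bool,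
        Real.sqrt |X ε| * (|X ε| * Real.sqrt |X ε|) = X ε ^ 2 := by
      intro ε
      rw [show Real.sqrt |X ε| * (|X ε| * Real.sqrt |X ε|)
        = (Real.sqrt |X ε| * Real.sqrt |X ε|) * |X ε| by ring,
        Real.mul_self_sqrt (abs_nonneg _), ← abs_mul, abs_mul_self, ← sq]
    have e2 : ∀ ε : Fin n → Bool, Real.sqrt |X ε| ^ 2 = |X ε| := fun ε =>
      Real.sq_sqrt (abs_nonneg _)
    have e3 : ∀ ε : Fin n → Bool, (|X ε| * Real.sqrt |X ε|) ^ 2 = X ε ^ 2 * |X ε| := by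
      intro ε
      rw [mul_pow, Real.sq_sqrt (abs_nonneg _), sq_abs]
    simp_rw [e1, e2, e3] at h
    exact h
  -- CS2 : S3² ≤ (∑ X²) * (∑ X⁴)
  have hCS2 : S3 ^ 2 ≤ (∑ ε : Fin n → Bool, X ε ^ 2) * (∑ ε : Fin n → Bool, X ε ^ 4) := by
    have h := Finset.sum_mul_sq_le_sq_mul_sq Finset.univ
      (fun ε => X ε) (fun ε => X ε * |X ε|)
    have e1 : ∀ ε : Fin n → Bool, X ε * (X ε * |X ε|) = X ε ^ 2 * |X ε| := by
      intro ε; ring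
    have e2 : ∀ ε : Fin n → Bool, (X ε * |X ε|) ^ 2 = X ε ^ 4 := by
      intro ε
      rw [mul_pow, sq_abs]; ring
    simp_rw [e1, e2] at h
    exact h
  rw [hT] at hCS1 hCS2
  -- derive S1 ≥ 2^n * s / √3
  rw [ge_iff_le, div_le_iff₀ (by positivity : (0:ℝ) < Real.sqrt 3)]
  -- suffices squares
  have hsq3 : Real.sqrt 3 ^ 2 = 3 := Real.sq_sqrt (by norm_num)
  have hP : (0:ℝ) < 2 ^ n := by positivity
  have hS3sq : S3 ^ 2 ≤ 2 ^ n * s * (3 * 2 ^ n * s ^ 2) :=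
    hCS2.trans (mul_le_mul_of_nonneg_left hU (by positivity))
  have h1 : ((2:ℝ) ^ n * s) ^ 2 * ((2:ℝ) ^ n * s) ^ 2 ≤ (S1 * S3) * (S1 * S3) :=
    mul_self_le_mul_self (by positivity) hCS1
  have h2 : ((2:ℝ) ^ n) ^ 2 * s ≤ 3 * S1 ^ 2 := by
    nlinarith [mul_pos (mul_pos hP hP) (pow_pos hpos 3), sq_nonneg S1, hS3sq, h1]
  have hfin : ((2:ℝ) ^ n * s) ^ 2 ≤ (S1 * Real.sqrt 3) ^ 2 := by
    have hs2 : s ^ 2 ≤ s := by nlinarith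
    nlinarith [sq_nonneg ((2:ℝ)^n), mul_le_mul_of_nonneg_left hs2 (sq_nonneg ((2:ℝ)^n))]
  exact le_of_pow_le_pow_left₀ two_ne_zero (by positivity) hfin

end Stmt1Aux

open Stmt1Aux

/-- For orthonormal vectors `v 1, …, v j₀` in `ℝ^{j*}` with
`j₀ ≥ j*/2 − 1` and `j₀ ≥ j*/3`, and i.i.d. Rademacher signs `ξ`, the expected
`ℓ¹` mass of `δ_ξ = ∑ k ξ k • v k` is at least `j*/(24√2)`. The expectation over
the Rademacher vector is written as the average over all sign patterns. -/
theorem stmt1 (jstar j₀ : ℕ)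
    (v : Fin j₀ → EuclideanSpace ℝ (Fin jstar)) (hv : Orthonormal ℝ v)
    (h1 : (j₀ : ℝ) ≥ (jstar : ℝ) / 2 - 1) (h2 : (j₀ : ℝ) ≥ (jstar : ℝ) / 3) :
    (1 / 2 ^ j₀ : ℝ) * ∑ ε : Fin j₀ → Bool, ∑ j : Fin jstar,
        |∑ k : Fin j₀, (if ε k then (1 : ℝ) else -1) * v k j|
      ≥ (jstar : ℝ) / (24 * Real.sqrt 2) := by
  have hr : ∀ (ε : Fin j₀ → Bool) (k : Fin j₀), (if ε k then (1 : ℝ) else -1) = r (ε k) :=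
    fun _ _ => rfl
  simp_rw [hr]
  -- column sums
  set s : Fin jstar → ℝ := fun j => ∑ k : Fin j₀, (v k j) ^ 2 with hs
  have hle : ∀ j, s j ≤ 1 := by
    intro j
    have hb := hv.sum_inner_products_le (𝕜 := ℝ) (EuclideanSpace.single j (1:ℝ)) (s := univ)
    have hinner : ∀ k : Fin j₀, (inner ℝ (v k) (EuclideanSpace.single j (1:ℝ)) : ℝ) = v k j := by
      intro k
      rw [EuclideanSpace.inner_single_right]
      simp
    have hnorm : ‖EuclideanSpace.single j (1:ℝ)‖ = 1 := by
      rw [EuclideanSpace.norm_single]; simp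
    simp_rw [hinner, hnorm, one_pow, Real.norm_eq_abs, sq_abs] at hb
    exact hb
  have hsumcols : ∑ j, s j = (j₀ : ℝ) := by
    rw [hs]
    rw [Finset.sum_comm]
    have hone : ∀ k : Fin j₀, ∑ j : Fin jstar, (v k j) ^ 2 = 1 := by
      intro k
      have hn : ‖v k‖ = 1 := hv.1 k
      have he := EuclideanSpace.norm_eq (v k)
      rw [hn] at he
      have h3 : (∑ j : Fin jstar, ‖v k j‖ ^ 2) = 1 := by
        have hc := congrArg (fun x : ℝ => x ^ 2) he
        simp only [one_pow] at hc
        rw [Real.sq_sqrt (Finset.sum_nonneg fun _ _ => sq_nonneg _)] at hc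
        exact hc.symm
      simpa [Real.norm_eq_abs, sq_abs] using h3
    simp [hone]
  -- rearrange LHS
  rw [Finset.sum_comm, Finset.mul_sum]
  have hterm : ∀ j : Fin jstar,
      s j / Real.sqrt 3 ≤
        (1 / 2 ^ j₀ : ℝ) * ∑ ε : Fin j₀ → Bool, |∑ k : Fin j₀, r (ε k) * v k j| := by
    intro j
    have hk0 := khint (fun k => v k j) (hle j)
    have hk : 2 ^ j₀ * s j / Real.sqrt 3
        ≤ ∑ ε : Fin j₀ → Bool, |∑ k : Fin j₀, r (ε k) * v k j| := hk0
    have h2n : (0:ℝ) < 2 ^ j₀ := by positivity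
    calc s j / Real.sqrt 3 = (1 / 2 ^ j₀) * (2 ^ j₀ * s j / Real.sqrt 3) := by
          field_simp
      _ ≤ (1 / 2 ^ j₀ : ℝ) * ∑ ε : Fin j₀ → Bool, |∑ k : Fin j₀, r (ε k) * v k j| := by
          apply mul_le_mul_of_nonneg_left hk (by positivity)
  have ha : Real.sqrt 3 ≤ 2 := by
    nlinarith [Real.sq_sqrt (by norm_num : (0:ℝ) ≤ 3), Real.sqrt_nonneg 3]
  have hb : 1 ≤ Real.sqrt 2 := by
    nlinarith [Real.sq_sqrt (by norm_num : (0:ℝ) ≤ 2), Real.sqrt_nonneg 2]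
  have hden : 3 * Real.sqrt 3 ≤ 24 * Real.sqrt 2 := by linarith
  calc (jstar : ℝ) / (24 * Real.sqrt 2) ≤ (jstar : ℝ) / (3 * Real.sqrt 3) := by
        gcongr
      _ = ((jstar : ℝ) / 3) / Real.sqrt 3 := by rw [div_div]
      _ ≤ (j₀ : ℝ) / Real.sqrt 3 := by gcongr
      _ = ∑ j, s j / Real.sqrt 3 := by rw [← Finset.sum_div, hsumcols]
      _ ≤ ∑ j : Fin jstar, (1 / 2 ^ j₀ : ℝ) * ∑ ε : Fin j₀ → Bool,
            |∑ k : Fin j₀, r (ε k) * v k j| := Finset.sum_le_sum fun j _ => hterm j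
end

section
/- Let Z₁, Z₂ be i.i.d. random vectors in ℝ^B with E Z_{1j} = p(j), Cov(Z_{1j},Z_{1j'}) = 1_{j=j'}(p(j)+8/α²) − p(j)p(j'), where p ∈ [0,1]^B with Σ_j p(j) ≤ 1 and α ∈ (0,1]. Define h(z₁,z₂) = Σ_{j∈B} (z_{1j}−p₀(j))(z_{2j}−p₀(j)) for a fixed vector p₀ ∈ [0,1]^B with Σ p₀(j) ≤ 1. Then Var(h(Z₁,Z₂)) is bounded and, for the U-statistic S_B = (1/(n(n−1))) Σ_{i₁≠i₂} h(Z_{i₁},Z_{i₂}) built from n i.i.d. copies, Var(S_B) ≤ (36/(nα²)) Σ_{j∈B} (p(j)−p₀(j))² + 164|B|/(n(n−1)α⁴). -/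
set_option maxHeartbeats 1000000


open MeasureTheory ProbabilityTheory Real Finset

/-- Covariance of two real random variables. -/
noncomputable def cov {Ω : Type*} [MeasureSpace Ω] (f g : Ω → ℝ) : ℝ :=
  ∫ ω, (f ω - ∫ ω', f ω' ∂ℙ) * (g ω - ∫ ω', g ω' ∂ℙ) ∂ℙ


lemma dsum_I1 {B : Type*} [Fintype B] [DecidableEq B] (a x y : B → ℝ) :
    ∑ j : B, ∑ j' : B, ((if j = j' then a j else 0) - y j * y j' + x j * x j') * (x j * x j')
      = (∑ j, a j * x j ^ 2) + ((∑ j, x j ^ 2) ^ 2 - (∑ j, x j * y j) ^ 2) := by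
  have step : ∀ j j' : B, ((if j = j' then a j else 0) - y j * y j' + x j * x j') * (x j * x j')
      = (if j = j' then a j * (x j * x j') else 0)
        + (x j ^ 2 * x j' ^ 2 - (x j * y j) * (x j' * y j')) := by
    intro j j'; split_ifs with h
    · subst h; ring
    · ring
  calc ∑ j : B, ∑ j' : B, ((if j = j' then a j else 0) - y j * y j' + x j * x j') * (x j * x j')
      = ∑ j : B, ∑ j' : B, ((if j = j' then a j * (x j * x j') else 0)
          + (x j ^ 2 * x j' ^ 2 - (x j * y j) * (x j' * y j'))) :=
        Finset.sum_congr rfl fun j _ => Finset.sum_congr rfl fun j' _ => step j j'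
    _ = (∑ j : B, ∑ j' : B, (if j = j' then a j * (x j * x j') else 0))
        + ((∑ j : B, ∑ j' : B, x j ^ 2 * x j' ^ 2)
          - ∑ j : B, ∑ j' : B, (x j * y j) * (x j' * y j')) := by
        simp only [Finset.sum_add_distrib, Finset.sum_sub_distrib]
    _ = (∑ j, a j * x j ^ 2) + ((∑ j, x j ^ 2) ^ 2 - (∑ j, x j * y j) ^ 2) := by
        rw [← Finset.sum_mul_sum, ← Finset.sum_mul_sum]
        simp only [Finset.sum_ite_eq, mem_univ, if_true]
        rw [← pow_two, ← pow_two]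
        congr 1
        exact Finset.sum_congr rfl fun j _ => by ring

lemma dsum_I2 {B : Type*} [Fintype B] [DecidableEq B] (a x y : B → ℝ) :
    ∑ j : B, ∑ j' : B, ((if j = j' then a j else 0) - y j * y j' + x j * x j') ^ 2
      = (∑ j, (a j ^ 2 + 2 * a j * (x j ^ 2 - y j ^ 2)))
        + ((∑ j, x j ^ 2) ^ 2 - 2 * (∑ j, x j * y j) ^ 2 + (∑ j, y j ^ 2) ^ 2) := by
  have step : ∀ j j' : B, ((if j = j' then a j else 0) - y j * y j' + x j * x j') ^ 2
      = (if j = j' then a j ^ 2 + 2 * a j * (x j * x j' - y j * y j') else 0)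
        + (x j ^ 2 * x j' ^ 2 - 2 * ((x j * y j) * (x j' * y j')) + y j ^ 2 * y j' ^ 2) := by
    intro j j'; split_ifs with h
    · subst h; ring
    · ring
  calc ∑ j : B, ∑ j' : B, ((if j = j' then a j else 0) - y j * y j' + x j * x j') ^ 2
      = ∑ j : B, ∑ j' : B, ((if j = j' then a j ^ 2 + 2 * a j * (x j * x j' - y j * y j') else 0)
          + (x j ^ 2 * x j' ^ 2 - 2 * ((x j * y j) * (x j' * y j')) + y j ^ 2 * y j' ^ 2)) :=
        Finset.sum_congr rfl fun j _ => Finset.sum_congr rfl fun j' _ => step j j'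
    _ = (∑ j : B, ∑ j' : B, (if j = j' then a j ^ 2 + 2 * a j * (x j * x j' - y j * y j') else 0))
        + (((∑ j : B, ∑ j' : B, x j ^ 2 * x j' ^ 2)
          - ∑ j : B, ∑ j' : B, 2 * ((x j * y j) * (x j' * y j')))
          + ∑ j : B, ∑ j' : B, y j ^ 2 * y j' ^ 2) := by
        simp only [Finset.sum_add_distrib, Finset.sum_sub_distrib]
    _ = (∑ j, (a j ^ 2 + 2 * a j * (x j ^ 2 - y j ^ 2)))
        + ((∑ j, x j ^ 2) ^ 2 - 2 * (∑ j, x j * y j) ^ 2 + (∑ j, y j ^ 2) ^ 2) := by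
        have e2 : (∑ j : B, ∑ j' : B, 2 * ((x j * y j) * (x j' * y j')))
            = 2 * (∑ j, x j * y j) ^ 2 := by
          rw [pow_two, Finset.sum_mul_sum]
          simp only [Finset.mul_sum]
        rw [e2, ← Finset.sum_mul_sum, ← Finset.sum_mul_sum]
        simp only [Finset.sum_ite_eq, mem_univ, if_true]
        rw [← pow_two, ← pow_two]
        congr 1
        exact Finset.sum_congr rfl fun j _ => by ring


lemma scalar_ineq (N u c D W Sp2 E1 E2 : ℝ) (hN : 2 ≤ N) (hu1 : 1 ≤ u) (hc1 : 1 ≤ c)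
    (hD0 : 0 ≤ D) (hE1_0 : 0 ≤ E1) (hE1_le : E1 ≤ (1 + 8 * u) * D)
    (hE2_le : E2 ≤ 1 + 16 * u + c * (8 * u) ^ 2 + 2 * E1)
    (hSp2_0 : 0 ≤ Sp2) (hSp2_1 : Sp2 ≤ 1) :
    2 * ((E2 + (D ^ 2 - 2 * W ^ 2 + Sp2 ^ 2)) - D ^ 2)
      + 4 * (N - 2) * ((E1 + (D ^ 2 - W ^ 2)) - D ^ 2)
    ≤ 36 * u * (N - 1) * D + 164 * c * u ^ 2 := by
  have hu0 : (0:ℝ) < u := by linarith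
  have h1 : 4 * (N - 1) * E1 ≤ 4 * (N - 1) * ((1 + 8 * u) * D) := by
    have : (0:ℝ) ≤ 4 * (N - 1) := by linarith
    exact mul_le_mul_of_nonneg_left hE1_le this
  have h2 : 4 * (N - 1) * ((1 + 8 * u) * D) ≤ 36 * u * (N - 1) * D := by
    have hND : (0:ℝ) ≤ (N - 1) * D := mul_nonneg (by linarith) hD0
    nlinarith
  have h3 : 2 + 32 * u + 2 * c * (8 * u) ^ 2 + 2 * Sp2 ^ 2 ≤ 164 * c * u ^ 2 := by
    have hcu : (1:ℝ) ≤ c * u ^ 2 := by nlinarith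
    have huu : u ≤ u ^ 2 := by nlinarith
    have hucu : u ≤ c * u ^ 2 := by nlinarith
    have hS : Sp2 ^ 2 ≤ 1 := by nlinarith
    nlinarith [hS, hcu, hucu]
  have h4 : 0 ≤ 4 * (N - 1) * W ^ 2 := mul_nonneg (by linarith) (sq_nonneg W)
  nlinarith [hE2_le]

lemma alg_ineq {B : Type*} [Fintype B] [DecidableEq B] (n : ℕ) (hn : 2 ≤ n)
    (α : ℝ) (hα : 0 < α) (hα1 : α ≤ 1)
    (p p₀ : B → ℝ) (hp0 : ∀ j, 0 ≤ p j) (hp1 : ∑ j, p j ≤ 1)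
    (hp₀0 : ∀ j, 0 ≤ p₀ j) (hp₀1 : ∑ j, p₀ j ≤ 1) :
    (2 * ((∑ j : B, ∑ j' : B, ((if j = j' then p j + 8/α^2 else 0) - p j * p j'
            + (p j - p₀ j) * (p j' - p₀ j'))^2) - (∑ j : B, (p j - p₀ j)^2)^2)
      + 4 * ((n : ℝ) - 2) * ((∑ j : B, ∑ j' : B, ((if j = j' then p j + 8/α^2 else 0) - p j * p j'
            + (p j - p₀ j) * (p j' - p₀ j')) * ((p j - p₀ j) * (p j' - p₀ j')))
          - (∑ j : B, (p j - p₀ j)^2)^2))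
      / ((n : ℝ) * ((n : ℝ) - 1))
    ≤ 36 / ((n : ℝ) * α ^ 2) * ∑ j : B, (p j - p₀ j) ^ 2
        + 164 * (Fintype.card B : ℝ) / ((n : ℝ) * ((n:ℝ) - 1) * α ^ 4) := by
  have hα2 : (0:ℝ) < α ^ 2 := by positivity
  have hN2 : (2:ℝ) ≤ (n:ℝ) := by exact_mod_cast hn
  have hN0 : (0:ℝ) < (n:ℝ) := by linarith
  have hN1 : (0:ℝ) < (n:ℝ) - 1 := by linarith
  have hNN : (0:ℝ) < (n:ℝ) * ((n:ℝ) - 1) := by positivity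
  have hu0 : 0 < (α ^ 2)⁻¹ := by positivity
  have hu1 : 1 ≤ (α ^ 2)⁻¹ := by
    rw [le_inv_comm₀ one_pos hα2]; nlinarith
  have h8 : 8 / α ^ 2 = 8 * (α ^ 2)⁻¹ := by field_simp
  rw [h8, dsum_I1 (fun j => p j + 8 * (α ^ 2)⁻¹) (fun j => p j - p₀ j) p,
    dsum_I2 (fun j => p j + 8 * (α ^ 2)⁻¹) (fun j => p j - p₀ j) p]
  have hD0 : 0 ≤ ∑ j : B, (p j - p₀ j) ^ 2 := Finset.sum_nonneg fun j _ => sq_nonneg _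
  have hpj1 : ∀ j, p j ≤ 1 := fun j =>
    le_trans (Finset.single_le_sum (fun i _ => hp0 i) (mem_univ j)) hp1
  -- empty case
  rcases Nat.eq_zero_or_pos (Fintype.card B) with hB | hB
  · have hBe : (Finset.univ : Finset B) = ∅ := by
      rw [← Finset.card_eq_zero, card_univ]; exact hB
    rw [hBe, hB]
    simp only [Finset.sum_empty, Nat.cast_zero]
    norm_num
  · have hc1 : (1:ℝ) ≤ (Fintype.card B : ℝ) := by exact_mod_cast hB
    have hSp2_1 : ∑ j : B, p j ^ 2 ≤ 1 := by
      refine le_trans (Finset.sum_le_sum fun j _ => ?_) hp1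
      nlinarith [hp0 j, hpj1 j]
    have hSp2_0 : 0 ≤ ∑ j : B, p j ^ 2 := Finset.sum_nonneg fun j _ => sq_nonneg _
    have hE1_le : ∑ j : B, (p j + 8 * (α ^ 2)⁻¹) * (p j - p₀ j) ^ 2
        ≤ (1 + 8 * (α ^ 2)⁻¹) * ∑ j : B, (p j - p₀ j) ^ 2 := by
      rw [Finset.mul_sum]
      refine Finset.sum_le_sum fun j _ => ?_
      have := hpj1 j; nlinarith [sq_nonneg (p j - p₀ j)]
    have hE1_0 : 0 ≤ ∑ j : B, (p j + 8 * (α ^ 2)⁻¹) * (p j - p₀ j) ^ 2 :=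
      Finset.sum_nonneg fun j _ => mul_nonneg (by nlinarith [hp0 j]) (sq_nonneg _)
    have hE2_le : ∑ j : B, ((p j + 8 * (α ^ 2)⁻¹) ^ 2
          + 2 * (p j + 8 * (α ^ 2)⁻¹) * ((p j - p₀ j) ^ 2 - p j ^ 2))
        ≤ 1 + 16 * (α ^ 2)⁻¹ + (Fintype.card B : ℝ) * (8 * (α ^ 2)⁻¹) ^ 2
          + 2 * ∑ j : B, (p j + 8 * (α ^ 2)⁻¹) * (p j - p₀ j) ^ 2 := by
      have step : ∀ j : B, (p j + 8 * (α ^ 2)⁻¹) ^ 2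
            + 2 * (p j + 8 * (α ^ 2)⁻¹) * ((p j - p₀ j) ^ 2 - p j ^ 2)
          ≤ (p j + 16 * (α ^ 2)⁻¹ * p j + (8 * (α ^ 2)⁻¹) ^ 2)
            + 2 * ((p j + 8 * (α ^ 2)⁻¹) * (p j - p₀ j) ^ 2) := by
        intro j
        have h1 := hp0 j; have h2 := hpj1 j
        nlinarith [sq_nonneg (p j), mul_nonneg (mul_nonneg (by norm_num : (0:ℝ) ≤ 16) hu0.le) h1]
      refine le_trans (Finset.sum_le_sum fun j _ => step j) ?_
      rw [Finset.sum_add_distrib, ← Finset.mul_sum]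
      have h3 : ∑ j : B, (p j + 16 * (α ^ 2)⁻¹ * p j + (8 * (α ^ 2)⁻¹) ^ 2)
          = (∑ j, p j) + 16 * (α ^ 2)⁻¹ * (∑ j, p j)
            + (Fintype.card B : ℝ) * (8 * (α ^ 2)⁻¹) ^ 2 := by
        rw [Finset.sum_add_distrib, Finset.sum_add_distrib, ← Finset.mul_sum, Finset.sum_const,
          card_univ, nsmul_eq_mul]
      rw [h3]
      have hps0 : 0 ≤ ∑ j, p j := Finset.sum_nonneg fun j _ => hp0 j
      have : (∑ j, p j) + 16 * (α ^ 2)⁻¹ * (∑ j, p j) ≤ 1 + 16 * (α ^ 2)⁻¹ := by nlinarith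
      linarith
    have main := scalar_ineq ((n:ℝ)) ((α ^ 2)⁻¹) (Fintype.card B : ℝ)
      (∑ j : B, (p j - p₀ j) ^ 2) (∑ j : B, (p j - p₀ j) * p j) (∑ j : B, p j ^ 2)
      (∑ j : B, (p j + 8 * (α ^ 2)⁻¹) * (p j - p₀ j) ^ 2)
      (∑ j : B, ((p j + 8 * (α ^ 2)⁻¹) ^ 2
          + 2 * (p j + 8 * (α ^ 2)⁻¹) * ((p j - p₀ j) ^ 2 - p j ^ 2)))
      hN2 hu1 hc1 hD0 hE1_0 hE1_le hE2_le hSp2_0 hSp2_1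
    rw [div_le_iff₀ hNN]
    have heq : ∀ Dv cv : ℝ, (36 / ((n:ℝ) * α ^ 2) * Dv
          + 164 * cv / ((n:ℝ) * ((n:ℝ) - 1) * α ^ 4)) * ((n:ℝ) * ((n:ℝ) - 1))
        = 36 * (α ^ 2)⁻¹ * ((n:ℝ) - 1) * Dv + 164 * cv * ((α ^ 2)⁻¹) ^ 2 := by
      intro Dv cv
      have hα0 : α ≠ 0 := ne_of_gt hα
      field_simp
    rw [heq]
    exact main

lemma l2_integrable_mul {Ω : Type*} [MeasureSpace Ω] {f g : Ω → ℝ}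
    (hf : MemLp f 2 ℙ) (hg : MemLp g 2 ℙ) :
    Integrable (fun ω => f ω * g ω) ℙ := by
  have h : MemLp (f • g) 1 ℙ := MemLp.smul hg hf
  rw [memLp_one_iff_integrable] at h
  exact h

lemma integral_sub_const_mul {Ω : Type*} [MeasureSpace Ω] [IsProbabilityMeasure (ℙ : Measure Ω)]
    {f g : Ω → ℝ} (hf : MemLp f 2 ℙ) (hg : MemLp g 2 ℙ) (c d : ℝ) :
    ∫ ω, (f ω - c) * (g ω - d) ∂ℙ
      = cov f g + ((∫ ω, f ω ∂ℙ) - c) * ((∫ ω, g ω ∂ℙ) - d) := by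
  have hfi : Integrable f ℙ := hf.integrable one_le_two
  have hgi : Integrable g ℙ := hg.integrable one_le_two
  set mf := ∫ ω, f ω ∂ℙ with hmf
  set mg := ∫ ω, g ω ∂ℙ with hmg
  have hf' : MemLp (fun ω => f ω - mf) 2 ℙ := hf.sub (memLp_const mf)
  have hg' : MemLp (fun ω => g ω - mg) 2 ℙ := hg.sub (memLp_const mg)
  have h1 : Integrable (fun ω => (f ω - mf) * (g ω - mg)) ℙ := l2_integrable_mul hf' hg'
  have h2 : Integrable (fun ω => (mf - c) * (g ω - mg)) ℙ :=
    (hg'.integrable one_le_two).const_mul _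
  have h3 : Integrable (fun ω => (mg - d) * (f ω - mf)) ℙ :=
    (hf'.integrable one_le_two).const_mul _
  have h4 : Integrable (fun _ : Ω => (mf - c) * (mg - d)) ℙ := integrable_const _
  have key : (fun ω => (f ω - c) * (g ω - d))
      = fun ω => (f ω - mf) * (g ω - mg) + ((mf - c) * (g ω - mg)
        + ((mg - d) * (f ω - mf) + (mf - c) * (mg - d))) := by
    funext ω; ring
  have h6 : Integrable (fun ω => (mg - d) * (f ω - mf) + (mf - c) * (mg - d)) ℙ := h3.add h4
  have h5 : Integrable (fun ω => (mf - c) * (g ω - mg)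
      + ((mg - d) * (f ω - mf) + (mf - c) * (mg - d))) ℙ := h2.add h6
  rw [key, integral_add h1 h5, integral_add h2 h6, integral_add h3 h4]
  have z1 : ∫ ω, (mf - c) * (g ω - mg) ∂ℙ = 0 := by
    rw [integral_const_mul, integral_sub hgi (integrable_const mg), integral_const]
    simp [hmg]
  have z2 : ∫ ω, (mg - d) * (f ω - mf) ∂ℙ = 0 := by
    rw [integral_const_mul, integral_sub hfi (integrable_const mf), integral_const]
    simp [hmf]
  have z3 : ∫ _ : Ω, (mf - c) * (mg - d) ∂ℙ = (mf - c) * (mg - d) := by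
    rw [integral_const]; simp
  rw [z1, z2, z3, cov]
  ring

lemma ustat_var {Ω : Type*} [MeasureSpace Ω] [IsProbabilityMeasure (ℙ : Measure Ω)]
    {n : ℕ} (hn : 2 ≤ n) (h : Fin n → Fin n → Ω → ℝ) (Q K E : ℝ)
    (hmem : ∀ a b, a ≠ b → MemLp (h a b) 2 ℙ)
    (hint : ∀ a b c d, a ≠ b → c ≠ d → Integrable (fun ω => h a b ω * h c d ω) ℙ)
    (hQ : ∀ a b, a ≠ b → ∫ ω, h a b ω * h a b ω ∂ℙ = Q)
    (hK : ∀ a b d, a ≠ b → a ≠ d → b ≠ d → ∫ ω, h a b ω * h a d ω ∂ℙ = K)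
    (hD : ∀ a b c d, a ≠ b → c ≠ d → a ≠ c → a ≠ d → b ≠ c → b ≠ d →
      ∫ ω, h a b ω * h c d ω ∂ℙ = E ^ 2)
    (hE : ∀ a b, a ≠ b → ∫ ω, h a b ω ∂ℙ = E)
    (hsymm : ∀ a b, h a b = h b a) :
    variance (fun ω => ∑ a : Fin n, ∑ b ∈ Finset.univ.filter (fun b => b ≠ a), h a b ω) ℙ
      = ((n:ℝ) * ((n:ℝ) - 1)) * (2 * (Q - E ^ 2) + 4 * ((n:ℝ) - 2) * (K - E ^ 2)) := by
  classical
  have hn1 : 1 ≤ n := le_trans one_le_two hn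
  have hfil : ∀ a : Fin n, (univ.filter (fun b => b ≠ a)) = univ.erase a := fun a =>
    Finset.filter_ne' univ a
  have hcard : ∀ a : Fin n, (((univ : Finset (Fin n)).erase a).card : ℝ) = (n : ℝ) - 1 := by
    intro a
    rw [Finset.card_erase_of_mem (mem_univ a), card_univ, Fintype.card_fin,
      Nat.cast_sub hn1, Nat.cast_one]
  have hmemf : ∀ a b : Fin n, b ∈ univ.filter (fun b => b ≠ a) → a ≠ b := fun a b hb =>
    Ne.symm (Finset.mem_filter.mp hb).2
  have hint1 : ∀ a b : Fin n, a ≠ b → Integrable (h a b) ℙ := fun a b hab =>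
    (hmem a b hab).integrable one_le_two
  -- value of each cross term
  have hval : ∀ a b c d : Fin n, a ≠ b → c ≠ d →
      ∫ ω, h a b ω * h c d ω ∂ℙ
        = E ^ 2 + ((if c = a then (1:ℝ) else 0) + (if c = b then 1 else 0)
            + (if d = a then 1 else 0) + (if d = b then 1 else 0)) * (K - E ^ 2)
          + ((if c = a then (1:ℝ) else 0) * (if d = b then 1 else 0)
            + (if c = b then (1:ℝ) else 0) * (if d = a then 1 else 0))
            * (Q + E ^ 2 - 2 * K) := by
    intro a b c d hab hcd
    by_cases hca : c = a
    · by_cases hdb : d = b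
      · have hv : ∫ ω, h a b ω * h c d ω ∂ℙ = Q := by
          rw [hca, hdb]; exact hQ a b hab
        have hda : ¬ d = a := fun hh => hcd (hca.trans hh.symm)
        have hcb : ¬ c = b := fun hh => hab (hca.symm.trans hh)
        rw [hv]; simp [hca, hdb, hda, hcb, hab, hab.symm]; try ring
      · have had : a ≠ d := fun hh => hcd (hca.trans hh)
        have hv : ∫ ω, h a b ω * h c d ω ∂ℙ = K := by
          rw [hca]; exact hK a b d hab had (fun hh => hdb hh.symm)
        have hcb : ¬ c = b := fun hh => hab (hca.symm.trans hh)
        have hda : ¬ d = a := fun hh => had hh.symm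
        rw [hv]; simp [hca, hcb, hda, hdb, hab, hab.symm]; try ring
    · by_cases hcb : c = b
      · by_cases hda : d = a
        · have hv : ∫ ω, h a b ω * h c d ω ∂ℙ = Q := by
            rw [hcb, hda, hsymm b a]; exact hQ a b hab
          have hdb : ¬ d = b := fun hh => hcd (hcb.trans hh.symm)
          rw [hv]; simp [hca, hcb, hda, hdb, hab, hab.symm]; try ring
        · have hbd : b ≠ d := fun hh => hcd (hcb.trans hh)
          have hv : ∫ ω, h a b ω * h c d ω ∂ℙ = K := by
            rw [hcb, hsymm a b]; exact hK b a d (Ne.symm hab) hbd (fun hh => hda hh.symm)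
          have hdb : ¬ d = b := fun hh => hbd hh.symm
          rw [hv]; simp [hca, hcb, hda, hdb, hab, hab.symm]; try ring
      · by_cases hda : d = a
        · have hv : ∫ ω, h a b ω * h c d ω ∂ℙ = K := by
            rw [hda, hsymm c a]; exact hK a b c hab (fun hh => hca hh.symm) (fun hh => hcb hh.symm)
          have hdb : ¬ d = b := fun hh => hab (hda.symm.trans hh)
          rw [hv]; simp [hca, hcb, hda, hdb, hab, hab.symm]; try ring
        · by_cases hdb : d = b
          · have hv : ∫ ω, h a b ω * h c d ω ∂ℙ = K := by
              rw [hdb, hsymm a b, hsymm c b]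
              exact hK b a c (Ne.symm hab) (fun hh => hcb hh.symm) (fun hh => hca hh.symm)
            rw [hv]; simp [hca, hcb, hda, hdb, hab, hab.symm]; try ring
          · have hv : ∫ ω, h a b ω * h c d ω ∂ℙ = E ^ 2 :=
              hD a b c d hab hcd (fun hh => hca hh.symm) (fun hh => hda hh.symm)
                (fun hh => hcb hh.symm) (fun hh => hdb hh.symm)
            rw [hv]; simp [hca, hcb, hda, hdb, hab, hab.symm]
  -- counting
  have hcount : ∀ a b : Fin n, a ≠ b →
      (∑ c : Fin n, ∑ d ∈ univ.filter (fun d => d ≠ c),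
        (E ^ 2 + ((if c = a then (1:ℝ) else 0) + (if c = b then 1 else 0)
            + (if d = a then 1 else 0) + (if d = b then 1 else 0)) * (K - E ^ 2)
          + ((if c = a then (1:ℝ) else 0) * (if d = b then 1 else 0)
            + (if c = b then (1:ℝ) else 0) * (if d = a then 1 else 0))
            * (Q + E ^ 2 - 2 * K)))
      = (n:ℝ) * ((n:ℝ) - 1) * E ^ 2 + (4 * ((n:ℝ) - 1)) * (K - E ^ 2)
        + 2 * (Q + E ^ 2 - 2 * K) := by
    intro a b hab
    have sa : ∀ e : Fin n, ∑ d : Fin n, (if d = e then (1:ℝ) else 0) = 1 := by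
      intro e; simp
    have hzero : ∀ c : Fin n, (if c = a then (1:ℝ) else 0) * (if c = b then 1 else 0) = 0 := by
      intro c
      by_cases h1 : c = a
      · have h2 : ¬ c = b := fun hh => hab (h1.symm.trans hh)
        simp [h1, h2, hab]
      · simp [h1]
    have h2 : ∀ c : Fin n, (∑ d : Fin n,
        (E ^ 2 + ((if c = a then (1:ℝ) else 0) + (if c = b then 1 else 0)
            + (if d = a then 1 else 0) + (if d = b then 1 else 0)) * (K - E ^ 2)
          + ((if c = a then (1:ℝ) else 0) * (if d = b then 1 else 0)
            + (if c = b then (1:ℝ) else 0) * (if d = a then 1 else 0))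
            * (Q + E ^ 2 - 2 * K)))
        = (n:ℝ) * (E ^ 2 + ((if c = a then (1:ℝ) else 0) + (if c = b then 1 else 0)) * (K - E^2))
          + 2 * (K - E ^ 2)
          + ((if c = a then (1:ℝ) else 0) + (if c = b then 1 else 0)) * (Q + E ^ 2 - 2 * K) := by
      intro c
      have e1 : ∀ d : Fin n,
          (E ^ 2 + ((if c = a then (1:ℝ) else 0) + (if c = b then 1 else 0)
            + (if d = a then 1 else 0) + (if d = b then 1 else 0)) * (K - E ^ 2)
          + ((if c = a then (1:ℝ) else 0) * (if d = b then 1 else 0)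
            + (if c = b then (1:ℝ) else 0) * (if d = a then 1 else 0))
            * (Q + E ^ 2 - 2 * K))
          = (E ^ 2 + ((if c = a then (1:ℝ) else 0) + (if c = b then 1 else 0)) * (K - E ^ 2))
            + ((if d = a then (1:ℝ) else 0) * (K - E ^ 2)
            + ((if d = b then (1:ℝ) else 0) * (K - E ^ 2)
            + ((if c = a then (1:ℝ) else 0) * ((if d = b then 1 else 0) * (Q + E ^ 2 - 2 * K))
              + (if c = b then (1:ℝ) else 0)
                * ((if d = a then 1 else 0) * (Q + E ^ 2 - 2 * K))))) := fun d => by ring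
      rw [Finset.sum_congr rfl fun d _ => e1 d]
      simp only [Finset.sum_add_distrib, Finset.sum_const, card_univ, Fintype.card_fin,
        nsmul_eq_mul, ← Finset.sum_mul, ← Finset.mul_sum, sa]
      ring
    have h3 : (∑ c : Fin n,
        ((n:ℝ) * (E ^ 2 + ((if c = a then (1:ℝ) else 0) + (if c = b then 1 else 0)) * (K - E^2))
          + 2 * (K - E ^ 2)
          + ((if c = a then (1:ℝ) else 0) + (if c = b then 1 else 0)) * (Q + E ^ 2 - 2 * K)))
        = (n:ℝ) * (n:ℝ) * E ^ 2 + 4 * (n:ℝ) * (K - E ^ 2) + 2 * (Q + E ^ 2 - 2 * K) := by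
      have e2 : ∀ c : Fin n,
          ((n:ℝ) * (E ^ 2 + ((if c = a then (1:ℝ) else 0) + (if c = b then 1 else 0)) * (K - E^2))
          + 2 * (K - E ^ 2)
          + ((if c = a then (1:ℝ) else 0) + (if c = b then 1 else 0)) * (Q + E ^ 2 - 2 * K))
          = ((n:ℝ) * E ^ 2 + 2 * (K - E ^ 2))
            + ((if c = a then (1:ℝ) else 0) * ((n:ℝ) * (K - E^2) + (Q + E ^ 2 - 2 * K))
              + (if c = b then (1:ℝ) else 0) * ((n:ℝ) * (K - E^2) + (Q + E ^ 2 - 2 * K))) :=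
        fun c => by ring
      rw [Finset.sum_congr rfl fun c _ => e2 c]
      simp only [Finset.sum_add_distrib, Finset.sum_const, card_univ, Fintype.card_fin,
        nsmul_eq_mul, ← Finset.sum_mul, sa]
      ring
    have h4 : (∑ c : Fin n,
        (E ^ 2 + ((if c = a then (1:ℝ) else 0) + (if c = b then 1 else 0)
            + (if c = a then 1 else 0) + (if c = b then 1 else 0)) * (K - E ^ 2)
          + ((if c = a then (1:ℝ) else 0) * (if c = b then 1 else 0)
            + (if c = b then (1:ℝ) else 0) * (if c = a then 1 else 0))
            * (Q + E ^ 2 - 2 * K)))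
        = (n:ℝ) * E ^ 2 + 4 * (K - E ^ 2) := by
      have e3 : ∀ c : Fin n,
          (E ^ 2 + ((if c = a then (1:ℝ) else 0) + (if c = b then 1 else 0)
            + (if c = a then 1 else 0) + (if c = b then 1 else 0)) * (K - E ^ 2)
          + ((if c = a then (1:ℝ) else 0) * (if c = b then 1 else 0)
            + (if c = b then (1:ℝ) else 0) * (if c = a then 1 else 0))
            * (Q + E ^ 2 - 2 * K))
          = E ^ 2 + ((if c = a then (1:ℝ) else 0) * (2 * (K - E ^ 2))
              + (if c = b then (1:ℝ) else 0) * (2 * (K - E ^ 2))) := fun c => by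
        linear_combination (2 * (Q + E ^ 2 - 2 * K)) * hzero c
      rw [Finset.sum_congr rfl fun c _ => e3 c]
      simp only [Finset.sum_add_distrib, Finset.sum_const, card_univ, Fintype.card_fin,
        nsmul_eq_mul, ← Finset.sum_mul, sa]
      ring
    rw [Finset.sum_congr rfl fun c (_ : c ∈ univ) => by
      rw [hfil c, Finset.sum_erase_eq_sub (mem_univ c)]]
    rw [Finset.sum_sub_distrib, Finset.sum_congr rfl fun c _ => h2 c, h3, h4]
    ring
  -- put it together
  set T : Ω → ℝ := fun ω => ∑ a : Fin n, ∑ b ∈ Finset.univ.filter (fun b => b ≠ a), h a b ω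
    with hT
  have hTmem : MemLp T 2 ℙ :=
    memLp_finset_sum univ fun a _ => memLp_finset_sum _ fun b hb => hmem a b (hmemf a b hb)
  have hET : ∫ ω, T ω ∂ℙ = (n:ℝ) * ((n:ℝ) - 1) * E := by
    rw [hT]
    rw [integral_finset_sum univ (fun a _ =>
      integrable_finset_sum _ fun b hb => hint1 a b (hmemf a b hb))]
    have step : ∀ a ∈ (univ : Finset (Fin n)),
        (∫ ω, ∑ b ∈ Finset.univ.filter (fun b => b ≠ a), h a b ω ∂ℙ) = ((n:ℝ) - 1) * E := by
      intro a _
      rw [integral_finset_sum _ (fun b hb => hint1 a b (hmemf a b hb))]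
      rw [Finset.sum_congr rfl fun b hb => hE a b (hmemf a b hb), Finset.sum_const,
        hfil a, nsmul_eq_mul, hcard a]
    rw [Finset.sum_congr rfl step, Finset.sum_const, card_univ, Fintype.card_fin, nsmul_eq_mul]
    ring
  have hTsq : ∀ ω, T ω * T ω = ∑ a : Fin n, ∑ b ∈ Finset.univ.filter (fun b => b ≠ a),
      ∑ c : Fin n, ∑ d ∈ Finset.univ.filter (fun d => d ≠ c), h a b ω * h c d ω := by
    intro ω
    rw [hT]
    rw [Finset.sum_mul_sum]
    refine Finset.sum_congr rfl fun a _ => ?_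
    rw [Finset.sum_comm]
    refine Finset.sum_congr rfl fun b _ => ?_
    rw [Finset.sum_mul_sum]
  have hET2 : ∫ ω, T ω * T ω ∂ℙ
      = ∑ a : Fin n, ∑ b ∈ Finset.univ.filter (fun b => b ≠ a),
        ∑ c : Fin n, ∑ d ∈ Finset.univ.filter (fun d => d ≠ c),
          ∫ ω, h a b ω * h c d ω ∂ℙ := by
    rw [show (fun ω => T ω * T ω) = fun ω => ∑ a : Fin n,
        ∑ b ∈ Finset.univ.filter (fun b => b ≠ a), ∑ c : Fin n,
        ∑ d ∈ Finset.univ.filter (fun d => d ≠ c), h a b ω * h c d ω from funext hTsq]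
    rw [integral_finset_sum univ (fun a _ => integrable_finset_sum _ fun b hb =>
      integrable_finset_sum _ fun c _ => integrable_finset_sum _ fun d hd =>
        hint a b c d (hmemf a b hb) (hmemf c d hd))]
    refine Finset.sum_congr rfl fun a _ => ?_
    rw [integral_finset_sum _ (fun b hb => integrable_finset_sum _ fun c _ =>
      integrable_finset_sum _ fun d hd => hint a b c d (hmemf a b hb) (hmemf c d hd))]
    refine Finset.sum_congr rfl fun b hb => ?_
    rw [integral_finset_sum _ (fun c _ => integrable_finset_sum _ fun d hd =>
      hint a b c d (hmemf a b hb) (hmemf c d hd))]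
    refine Finset.sum_congr rfl fun c _ => ?_
    rw [integral_finset_sum _ (fun d hd => hint a b c d (hmemf a b hb) (hmemf c d hd))]
  have hET2' : ∫ ω, T ω * T ω ∂ℙ
      = (n:ℝ) * ((n:ℝ) - 1) * ((n:ℝ) * ((n:ℝ) - 1) * E ^ 2
          + (4 * ((n:ℝ) - 1)) * (K - E ^ 2) + 2 * (Q + E ^ 2 - 2 * K)) := by
    rw [hET2]
    have step : ∀ a ∈ (univ : Finset (Fin n)),
        (∑ b ∈ Finset.univ.filter (fun b => b ≠ a), ∑ c : Fin n,
          ∑ d ∈ Finset.univ.filter (fun d => d ≠ c), ∫ ω, h a b ω * h c d ω ∂ℙ)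
        = ((n:ℝ) - 1) * ((n:ℝ) * ((n:ℝ) - 1) * E ^ 2
          + (4 * ((n:ℝ) - 1)) * (K - E ^ 2) + 2 * (Q + E ^ 2 - 2 * K)) := by
      intro a _
      have inner : ∀ b ∈ Finset.univ.filter (fun b => b ≠ a),
          (∑ c : Fin n, ∑ d ∈ Finset.univ.filter (fun d => d ≠ c),
            ∫ ω, h a b ω * h c d ω ∂ℙ)
          = (n:ℝ) * ((n:ℝ) - 1) * E ^ 2 + (4 * ((n:ℝ) - 1)) * (K - E ^ 2)
            + 2 * (Q + E ^ 2 - 2 * K) := by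
        intro b hb
        have hab : a ≠ b := hmemf a b hb
        rw [Finset.sum_congr rfl fun c _ => Finset.sum_congr rfl fun d hd =>
          hval a b c d hab (hmemf c d hd)]
        exact hcount a b hab
      rw [Finset.sum_congr rfl inner, Finset.sum_const, hfil a, nsmul_eq_mul, hcard a]
    rw [Finset.sum_congr rfl step, Finset.sum_const, card_univ, Fintype.card_fin, nsmul_eq_mul]
    ring
  rw [variance_eq_sub hTmem]
  have hpow : (T ^ 2 : Ω → ℝ) = fun ω => T ω * T ω := by
    funext ω; simp [pow_two]
  rw [hpow]
  rw [show (∫ ω, (fun ω => T ω * T ω) ω ∂ℙ) = ∫ ω, T ω * T ω ∂ℙ from rfl]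
  rw [hET2', hET]
  ring

/-- For i.i.d. random vectors `Z i : Ω → B → ℝ` with
`E[Z i j] = p j` and `Cov(Z i j, Z i j') = 1_{j=j'}(p j + 8/α²) − p j p j'`,
the U-statistic `S_B = (1/(n(n−1))) ∑_{i₁≠i₂} ∑_{j∈B} (Z i₁ j − p₀ j)(Z i₂ j − p₀ j)`
satisfies `Var(S_B) ≤ (36/(nα²)) ∑_j (p j − p₀ j)² + 164 |B| /(n(n−1)α⁴)`. -/
theorem stmt7 {Ω : Type*} [MeasureSpace Ω] [IsProbabilityMeasure (ℙ : Measure Ω)]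
    (B : Type*) [Fintype B] [DecidableEq B] (n : ℕ) (hn : 2 ≤ n) (α : ℝ) (hα : 0 < α) (hα1 : α ≤ 1)
    (p p₀ : B → ℝ) (hp0 : ∀ j, 0 ≤ p j) (hp1 : ∑ j, p j ≤ 1)
    (hp₀0 : ∀ j, 0 ≤ p₀ j) (hp₀1 : ∑ j, p₀ j ≤ 1)
    (Z : Fin n → Ω → B → ℝ)
    (hZmeas : ∀ i, Measurable (Z i))
    (hZL2 : ∀ i j, MemLp (fun ω => Z i ω j) 2 ℙ)
    (hindep : iIndepFun Z ℙ)
    (hid : ∀ i i', IdentDistrib (Z i) (Z i') ℙ ℙ)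
    (hmean : ∀ i j, ∫ ω, Z i ω j ∂ℙ = p j)
    (hcov : ∀ i j j', cov (fun ω => Z i ω j) (fun ω => Z i ω j')
      = (if j = j' then p j + 8 / α ^ 2 else 0) - p j * p j') :
    variance (fun ω => (1 / ((n : ℝ) * (n - 1))) *
        ∑ i₁ : Fin n, ∑ i₂ ∈ Finset.univ.filter (fun i₂ => i₂ ≠ i₁),
          ∑ j : B, (Z i₁ ω j - p₀ j) * (Z i₂ ω j - p₀ j)) ℙ
      ≤ (36 / ((n : ℝ) * α ^ 2)) * ∑ j : B, (p j - p₀ j) ^ 2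
        + 164 * (Fintype.card B : ℝ) / ((n : ℝ) * (n - 1) * α ^ 4) := by
  classical
  have hN2 : (2:ℝ) ≤ (n:ℝ) := by exact_mod_cast hn
  have hNN : (0:ℝ) < (n:ℝ) * ((n:ℝ) - 1) := by nlinarith
  -- coordinate facts
  have hYmeas : ∀ (i : Fin n) (j : B), Measurable (fun ω => Z i ω j - p₀ j) := fun i j =>
    ((measurable_pi_apply j).comp (hZmeas i)).sub measurable_const
  have hY2 : ∀ (i : Fin n) (j : B), MemLp (fun ω => Z i ω j - p₀ j) 2 ℙ := fun i j =>
    (hZL2 i j).sub (memLp_const _)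
  have hYint : ∀ (i : Fin n) (j : B), Integrable (fun ω => Z i ω j - p₀ j) ℙ := fun i j =>
    (hY2 i j).integrable one_le_two
  have hYmean : ∀ (i : Fin n) (j : B), ∫ ω, (Z i ω j - p₀ j) ∂ℙ = p j - p₀ j := by
    intro i j
    rw [integral_sub ((hZL2 i j).integrable one_le_two) (integrable_const _), hmean i j,
      integral_const]
    simp
  have hYY : ∀ (i : Fin n) (j j' : B), ∫ ω, (Z i ω j - p₀ j) * (Z i ω j' - p₀ j') ∂ℙ
      = (if j = j' then p j + 8 / α ^ 2 else 0) - p j * p j'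
        + (p j - p₀ j) * (p j' - p₀ j') := by
    intro i j j'
    rw [integral_sub_const_mul (hZL2 i j) (hZL2 i j') (p₀ j) (p₀ j'), hcov i j j',
      hmean i j, hmean i j']
  -- measurability of the auxiliary maps
  have hφm : ∀ j j' : B, Measurable (fun v : B → ℝ => (v j - p₀ j) * (v j' - p₀ j')) :=
    fun j j' => ((measurable_pi_apply j).sub measurable_const).mul
      ((measurable_pi_apply j').sub measurable_const)
  have hχm : ∀ j j' : B, Measurable (fun q : (B → ℝ) × (B → ℝ) =>
      (q.1 j - p₀ j) * (q.2 j' - p₀ j')) := fun j j' =>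
    (((measurable_pi_apply j).comp measurable_fst).sub measurable_const).mul
      (((measurable_pi_apply j').comp measurable_snd).sub measurable_const)
  -- product over two distinct indices
  have hbbI : ∀ (a b : Fin n), a ≠ b → ∀ j j' : B,
      Integrable (fun ω => (Z a ω j - p₀ j) * (Z b ω j' - p₀ j')) ℙ := by
    intro a b hab j j'
    have hIF : IndepFun (fun ω => Z a ω j - p₀ j) (fun ω => Z b ω j' - p₀ j') ℙ :=
      (hindep.indepFun hab).comp ((measurable_pi_apply j).sub measurable_const)
        ((measurable_pi_apply j').sub measurable_const)
    exact hIF.integrable_mul (hYint a j) (hYint b j')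
  have hbbE : ∀ (a b : Fin n), a ≠ b → ∀ j j' : B,
      ∫ ω, (Z a ω j - p₀ j) * (Z b ω j' - p₀ j') ∂ℙ = (p j - p₀ j) * (p j' - p₀ j') := by
    intro a b hab j j'
    have hIF : IndepFun (fun ω => Z a ω j - p₀ j) (fun ω => Z b ω j' - p₀ j') ℙ :=
      (hindep.indepFun hab).comp ((measurable_pi_apply j).sub measurable_const)
        ((measurable_pi_apply j').sub measurable_const)
    rw [hIF.integral_fun_mul_eq_mul_integral (hYint a j).aestronglyMeasurable (hYint b j').aestronglyMeasurable,
      hYmean a j, hYmean b j']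
  -- L² membership of each kernel
  have hsqint : ∀ (a b : Fin n), a ≠ b → ∀ j : B,
      MemLp (fun ω => (Z a ω j - p₀ j) * (Z b ω j - p₀ j)) 2 ℙ := by
    intro a b hab j
    have hmeas : AEStronglyMeasurable (fun ω => (Z a ω j - p₀ j) * (Z b ω j - p₀ j)) ℙ :=
      ((hYmeas a j).mul (hYmeas b j)).aestronglyMeasurable
    rw [memLp_two_iff_integrable_sq hmeas]
    have hIF : IndepFun (fun ω => (Z a ω j - p₀ j) ^ 2) (fun ω => (Z b ω j - p₀ j) ^ 2) ℙ :=
      (hindep.indepFun hab).comp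
        (((measurable_pi_apply j).sub measurable_const).pow_const 2)
        (((measurable_pi_apply j).sub measurable_const).pow_const 2)
    have hi : Integrable (fun ω => (Z a ω j - p₀ j) ^ 2 * (Z b ω j - p₀ j) ^ 2) ℙ :=
      hIF.integrable_mul ((hY2 a j).integrable_sq) ((hY2 b j).integrable_sq)
    have heq : (fun ω => ((Z a ω j - p₀ j) * (Z b ω j - p₀ j)) ^ 2)
        = fun ω => (Z a ω j - p₀ j) ^ 2 * (Z b ω j - p₀ j) ^ 2 := by funext ω; ring
    rw [heq]; exact hi
  have hmem : ∀ a b : Fin n, a ≠ b →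
      MemLp (fun ω => ∑ j : B, (Z a ω j - p₀ j) * (Z b ω j - p₀ j)) 2 ℙ := fun a b hab =>
    memLp_finset_sum univ fun j _ => hsqint a b hab j
  -- integrability of products of kernels
  have hint : ∀ a b c d : Fin n, a ≠ b → c ≠ d →
      Integrable (fun ω => (∑ j : B, (Z a ω j - p₀ j) * (Z b ω j - p₀ j))
        * (∑ j : B, (Z c ω j - p₀ j) * (Z d ω j - p₀ j))) ℙ := fun a b c d hab hcd =>
    l2_integrable_mul (hmem a b hab) (hmem c d hcd)
  -- symmetry of the kernel
  have hsymm : ∀ a b : Fin n, (fun ω => ∑ j : B, (Z a ω j - p₀ j) * (Z b ω j - p₀ j))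
      = fun ω => ∑ j : B, (Z b ω j - p₀ j) * (Z a ω j - p₀ j) := by
    intro a b; funext ω
    exact Finset.sum_congr rfl fun j _ => mul_comm _ _
  -- mean of the kernel
  have hE' : ∀ a b : Fin n, a ≠ b →
      ∫ ω, (∑ j : B, (Z a ω j - p₀ j) * (Z b ω j - p₀ j)) ∂ℙ
        = ∑ j : B, (p j - p₀ j) ^ 2 := by
    intro a b hab
    rw [integral_finset_sum _ fun j _ => hbbI a b hab j j]
    rw [Finset.sum_congr rfl fun j _ => hbbE a b hab j j]
    exact Finset.sum_congr rfl fun j _ => (pow_two _).symm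
  -- the three canonical second moments
  have hQ' : ∀ a b : Fin n, a ≠ b →
      ∫ ω, (∑ j : B, (Z a ω j - p₀ j) * (Z b ω j - p₀ j))
        * (∑ j : B, (Z a ω j - p₀ j) * (Z b ω j - p₀ j)) ∂ℙ
      = ∑ j : B, ∑ j' : B, ((if j = j' then p j + 8 / α ^ 2 else 0) - p j * p j'
          + (p j - p₀ j) * (p j' - p₀ j')) ^ 2 := by
    intro a b hab
    have hps : (fun ω => (∑ j : B, (Z a ω j - p₀ j) * (Z b ω j - p₀ j))
        * (∑ j : B, (Z a ω j - p₀ j) * (Z b ω j - p₀ j)))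
        = fun ω => ∑ j : B, ∑ j' : B, ((Z a ω j - p₀ j) * (Z a ω j' - p₀ j'))
            * ((Z b ω j - p₀ j) * (Z b ω j' - p₀ j')) := by
      funext ω
      rw [Finset.sum_mul_sum]
      exact Finset.sum_congr rfl fun j _ => Finset.sum_congr rfl fun j' _ => by ring
    have hIF : ∀ j j' : B, IndepFun (fun ω => (Z a ω j - p₀ j) * (Z a ω j' - p₀ j'))
        (fun ω => (Z b ω j - p₀ j) * (Z b ω j' - p₀ j')) ℙ := fun j j' =>
      (hindep.indepFun hab).comp (hφm j j') (hφm j j')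
    have hFint : ∀ (i : Fin n) (j j' : B),
        Integrable (fun ω => (Z i ω j - p₀ j) * (Z i ω j' - p₀ j')) ℙ := fun i j j' =>
      l2_integrable_mul (hY2 i j) (hY2 i j')
    have hterm : ∀ j j' : B, Integrable (fun ω => ((Z a ω j - p₀ j) * (Z a ω j' - p₀ j'))
        * ((Z b ω j - p₀ j) * (Z b ω j' - p₀ j'))) ℙ := fun j j' =>
      (hIF j j').integrable_mul (hFint a j j') (hFint b j j')
    rw [hps, integral_finset_sum _ fun j _ => integrable_finset_sum _ fun j' _ => hterm j j']
    refine Finset.sum_congr rfl fun j _ => ?_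
    rw [integral_finset_sum _ fun j' _ => hterm j j']
    refine Finset.sum_congr rfl fun j' _ => ?_
    rw [(hIF j j').integral_fun_mul_eq_mul_integral (hFint a j j').aestronglyMeasurable
      (hFint b j j').aestronglyMeasurable, hYY a j j', hYY b j j']
    exact (pow_two _).symm
  have hK' : ∀ a b d : Fin n, a ≠ b → a ≠ d → b ≠ d →
      ∫ ω, (∑ j : B, (Z a ω j - p₀ j) * (Z b ω j - p₀ j))
        * (∑ j : B, (Z a ω j - p₀ j) * (Z d ω j - p₀ j)) ∂ℙ
      = ∑ j : B, ∑ j' : B, (((if j = j' then p j + 8 / α ^ 2 else 0) - p j * p j'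
          + (p j - p₀ j) * (p j' - p₀ j')) * ((p j - p₀ j) * (p j' - p₀ j'))) := by
    intro a b d hab had hbd
    have hps : (fun ω => (∑ j : B, (Z a ω j - p₀ j) * (Z b ω j - p₀ j))
        * (∑ j : B, (Z a ω j - p₀ j) * (Z d ω j - p₀ j)))
        = fun ω => ∑ j : B, ∑ j' : B, ((Z a ω j - p₀ j) * (Z a ω j' - p₀ j'))
            * ((Z b ω j - p₀ j) * (Z d ω j' - p₀ j')) := by
      funext ω
      rw [Finset.sum_mul_sum]
      exact Finset.sum_congr rfl fun j _ => Finset.sum_congr rfl fun j' _ => by ring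
    have hIF : ∀ j j' : B, IndepFun (fun ω => (Z a ω j - p₀ j) * (Z a ω j' - p₀ j'))
        (fun ω => (Z b ω j - p₀ j) * (Z d ω j' - p₀ j')) ℙ := fun j j' =>
      ((hindep.indepFun_prodMk hZmeas b d a (Ne.symm hab) (Ne.symm had)).symm).comp
        (hφm j j') (hχm j j')
    have hFint : ∀ j j' : B,
        Integrable (fun ω => (Z a ω j - p₀ j) * (Z a ω j' - p₀ j')) ℙ := fun j j' =>
      l2_integrable_mul (hY2 a j) (hY2 a j')
    have hterm : ∀ j j' : B, Integrable (fun ω => ((Z a ω j - p₀ j) * (Z a ω j' - p₀ j'))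
        * ((Z b ω j - p₀ j) * (Z d ω j' - p₀ j'))) ℙ := fun j j' =>
      (hIF j j').integrable_mul (hFint j j') (hbbI b d hbd j j')
    rw [hps, integral_finset_sum _ fun j _ => integrable_finset_sum _ fun j' _ => hterm j j']
    refine Finset.sum_congr rfl fun j _ => ?_
    rw [integral_finset_sum _ fun j' _ => hterm j j']
    refine Finset.sum_congr rfl fun j' _ => ?_
    rw [(hIF j j').integral_fun_mul_eq_mul_integral (hFint j j').aestronglyMeasurable
      (hbbI b d hbd j j').aestronglyMeasurable, hYY a j j', hbbE b d hbd j j']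
  have hD' : ∀ a b c d : Fin n, a ≠ b → c ≠ d → a ≠ c → a ≠ d → b ≠ c → b ≠ d →
      ∫ ω, (∑ j : B, (Z a ω j - p₀ j) * (Z b ω j - p₀ j))
        * (∑ j : B, (Z c ω j - p₀ j) * (Z d ω j - p₀ j)) ∂ℙ
      = (∑ j : B, (p j - p₀ j) ^ 2) ^ 2 := by
    intro a b c d hab hcd hac had hbc hbd
    have hps : (fun ω => (∑ j : B, (Z a ω j - p₀ j) * (Z b ω j - p₀ j))
        * (∑ j : B, (Z c ω j - p₀ j) * (Z d ω j - p₀ j)))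
        = fun ω => ∑ j : B, ∑ j' : B, ((Z a ω j - p₀ j) * (Z b ω j - p₀ j))
            * ((Z c ω j' - p₀ j') * (Z d ω j' - p₀ j')) := by
      funext ω
      rw [Finset.sum_mul_sum]
    have hIF : ∀ j j' : B, IndepFun (fun ω => (Z a ω j - p₀ j) * (Z b ω j - p₀ j))
        (fun ω => (Z c ω j' - p₀ j') * (Z d ω j' - p₀ j')) ℙ := fun j j' =>
      (hindep.indepFun_prodMk_prodMk hZmeas a b c d hac had hbc hbd).comp
        (hχm j j) (hχm j' j')
    have hterm : ∀ j j' : B, Integrable (fun ω => ((Z a ω j - p₀ j) * (Z b ω j - p₀ j))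
        * ((Z c ω j' - p₀ j') * (Z d ω j' - p₀ j'))) ℙ := fun j j' =>
      (hIF j j').integrable_mul (hbbI a b hab j j) (hbbI c d hcd j' j')
    rw [hps, integral_finset_sum _ fun j _ => integrable_finset_sum _ fun j' _ => hterm j j']
    have step : ∀ j : B, (∑ j' : B, ∫ ω, ((Z a ω j - p₀ j) * (Z b ω j - p₀ j))
          * ((Z c ω j' - p₀ j') * (Z d ω j' - p₀ j')) ∂ℙ)
        = ∑ j' : B, ((p j - p₀ j) * (p j - p₀ j)) * ((p j' - p₀ j') * (p j' - p₀ j')) := by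
      intro j
      refine Finset.sum_congr rfl fun j' _ => ?_
      rw [(hIF j j').integral_fun_mul_eq_mul_integral (hbbI a b hab j j).aestronglyMeasurable
        (hbbI c d hcd j' j').aestronglyMeasurable, hbbE a b hab j j, hbbE c d hcd j' j']
    calc (∑ j : B, ∫ ω, ∑ j' : B, ((Z a ω j - p₀ j) * (Z b ω j - p₀ j))
          * ((Z c ω j' - p₀ j') * (Z d ω j' - p₀ j')) ∂ℙ)
        = ∑ j : B, ∑ j' : B, ((p j - p₀ j) * (p j - p₀ j))
            * ((p j' - p₀ j') * (p j' - p₀ j')) := by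
          refine Finset.sum_congr rfl fun j _ => ?_
          rw [integral_finset_sum _ fun j' _ => hterm j j']
          exact step j
      _ = (∑ j : B, (p j - p₀ j) ^ 2) ^ 2 := by
          rw [pow_two, Finset.sum_mul_sum]
          exact Finset.sum_congr rfl fun j _ => Finset.sum_congr rfl fun j' _ => by ring
  -- apply the U-statistic variance identity
  have hvar := ustat_var hn (fun a b ω => ∑ j : B, (Z a ω j - p₀ j) * (Z b ω j - p₀ j))
    (∑ j : B, ∑ j' : B, ((if j = j' then p j + 8 / α ^ 2 else 0) - p j * p j'
        + (p j - p₀ j) * (p j' - p₀ j')) ^ 2)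
    (∑ j : B, ∑ j' : B, (((if j = j' then p j + 8 / α ^ 2 else 0) - p j * p j'
        + (p j - p₀ j) * (p j' - p₀ j')) * ((p j - p₀ j) * (p j' - p₀ j'))))
    (∑ j : B, (p j - p₀ j) ^ 2)
    hmem hint hQ' hK' hD' hE' hsymm
  beta_reduce at hvar
  rw [variance_const_mul, hvar]
  have hfrac : ∀ L : ℝ, (1 / ((n:ℝ) * ((n:ℝ) - 1))) ^ 2 * (((n:ℝ) * ((n:ℝ) - 1)) * L)
      = L / ((n:ℝ) * ((n:ℝ) - 1)) := by
    intro L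
    field_simp
  rw [hfrac]
  exact alg_ineq n hn α hα hα1 p p₀ hp0 hp1 hp₀0 hp₀1
end

section
/- Suppose a random variable p̂ satisfies the concentration inequality P(|p̂ − p| ≥ v) ≤ 4 exp(−nα² v²/32) for all v > 0, and let τ = (nα²)^{−1/2}. If p − p₀ ≥ 2τ, then Var([p̂ − p₀]_{−τ}^{τ}) ≤ (16/(nα²)) exp(−nα²(p−p₀)²/128). -/
open MeasureTheory ProbabilityTheory Real

/-- If `p̂` satisfies `P(|p̂ − p| ≥ v) ≤ 4 exp(−nα²v²/32)` for all
`v > 0`, `τ = (nα²)^{−1/2}` and `p − p₀ ≥ 2τ`, then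
`Var([p̂ − p₀]_{−τ}^{τ}) ≤ (16/(nα²)) exp(−nα²(p−p₀)²/128)`. -/
theorem stmt9 {Ω : Type*} [MeasureSpace Ω] [IsProbabilityMeasure (ℙ : Measure Ω)]
    (n : ℕ) (hn : 0 < n) (α : ℝ) (hα : 0 < α)
    (phat : Ω → ℝ) (hmeas : Measurable phat) (p p₀ τ : ℝ)
    (hτ : τ = ((n : ℝ) * α ^ 2) ^ (-(1 / 2 : ℝ)))
    (hconc : ∀ v > 0, (ℙ {ω | v ≤ |phat ω - p|}).toReal
      ≤ 4 * Real.exp (-(n : ℝ) * α ^ 2 * v ^ 2 / 32))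
    (hgap : p - p₀ ≥ 2 * τ) :
    variance (fun ω => max (-τ) (min (phat ω - p₀) τ)) ℙ
      ≤ (16 / ((n : ℝ) * α ^ 2)) *
        Real.exp (-(n : ℝ) * α ^ 2 * (p - p₀) ^ 2 / 128) := by
  have hx : (0:ℝ) < (n:ℝ) * α ^ 2 := by positivity
  have hτpos : 0 < τ := hτ ▸ Real.rpow_pos_of_pos hx _
  have hτsq : τ ^ 2 = ((n:ℝ) * α ^ 2)⁻¹ := by
    rw [hτ, ← Real.rpow_natCast (((n:ℝ) * α ^ 2) ^ (-(1/2:ℝ))) 2,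
      ← Real.rpow_mul hx.le]
    norm_num [Real.rpow_neg_one, mul_inv, mul_comm]
  set C : Ω → ℝ := fun ω => max (-τ) (min (phat ω - p₀) τ) with hC
  have hmeasC : Measurable C :=
    measurable_const.max ((hmeas.sub measurable_const).min measurable_const)
  have hlb : ∀ ω, -τ ≤ C ω := fun ω => le_max_left _ _
  have hub : ∀ ω, C ω ≤ τ := fun ω =>
    max_le (by linarith) (min_le_right _ _)
  have hint : Integrable C ℙ := by
    apply Integrable.mono' (integrable_const τ) hmeasC.aestronglyMeasurable
    filter_upwards with ω
    rw [Real.norm_eq_abs, abs_le]; exact ⟨hlb ω, hub ω⟩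
  have hint2 : Integrable (fun ω => C ω ^ 2) ℙ := by
    apply Integrable.mono' (integrable_const (τ ^ 2))
      (hmeasC.pow_const 2).aestronglyMeasurable
    filter_upwards with ω
    rw [Real.norm_eq_abs, abs_of_nonneg (sq_nonneg _)]
    nlinarith [hlb ω, hub ω]
  have hMem : MemLp C 2 ℙ :=
    (memLp_two_iff_integrable_sq hmeasC.aestronglyMeasurable).2 hint2
  set A : Set Ω := {ω | (p - p₀) / 2 ≤ |phat ω - p|} with hA
  have hAmeas : MeasurableSet A :=
    measurableSet_le measurable_const (hmeas.sub measurable_const).abs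
  -- pointwise bound
  have hptw : ∀ ω, (C ω - τ) ^ 2 ≤ A.indicator (fun _ => 4 * τ ^ 2) ω := by
    intro ω
    by_cases hω : ω ∈ A
    · rw [Set.indicator_of_mem hω]
      nlinarith [hlb ω, hub ω]
    · rw [Set.indicator_of_notMem hω]
      have h1 : |phat ω - p| < (p - p₀) / 2 := not_le.mp hω
      have h2 : τ ≤ phat ω - p₀ := by
        have := abs_lt.mp h1; linarith
      have : C ω = τ := by
        rw [hC]; simp only
        rw [min_eq_right h2, max_eq_right (by linarith : -τ ≤ τ)]
      rw [this]; simp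
  have hint4 : Integrable (fun ω => (C ω - τ) ^ 2) ℙ := by
    apply Integrable.mono' (integrable_const (4 * τ ^ 2))
      ((hmeasC.sub measurable_const).pow_const 2).aestronglyMeasurable
    filter_upwards with ω
    rw [Real.norm_eq_abs, abs_of_nonneg (sq_nonneg _)]
    simp only [Pi.sub_apply]; nlinarith [hlb ω, hub ω]
  have hbound : ∫ ω, (C ω - τ) ^ 2 ∂ℙ ≤ 4 * τ ^ 2 * (ℙ A).toReal := by
    calc ∫ ω, (C ω - τ) ^ 2 ∂ℙ ≤ ∫ ω, A.indicator (fun _ => 4 * τ ^ 2) ω ∂ℙ := by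
          apply integral_mono _ _ hptw
          · exact hint4
          · exact (integrable_const (4 * τ ^ 2)).indicator hAmeas
      _ = 4 * τ ^ 2 * (ℙ A).toReal := by
          rw [integral_indicator_const _ hAmeas]; simp [mul_comm, measureReal_def]
  have hexpand : ∫ ω, (C ω - τ) ^ 2 ∂ℙ
      = (∫ ω, C ω ^ 2 ∂ℙ) - 2 * τ * (∫ ω, C ω ∂ℙ) + τ ^ 2 := by
    have h1 : ∀ ω, (C ω - τ) ^ 2 = C ω ^ 2 - 2 * τ * C ω + τ ^ 2 := by
      intro ω; ring
    simp_rw [h1]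
    have hint3 : Integrable (fun ω => C ω ^ 2 - 2 * τ * C ω) ℙ :=
      hint2.sub (hint.const_mul (2 * τ))
    rw [integral_add hint3 (integrable_const _),
      integral_sub hint2 (hint.const_mul (2 * τ)), integral_const_mul, integral_const]
    simp
  have hvar : variance C ℙ ≤ ∫ ω, (C ω - τ) ^ 2 ∂ℙ := by
    rw [variance_eq_sub hMem, hexpand]
    have : ℙ[C ^ 2] = ∫ ω, C ω ^ 2 ∂ℙ := by rfl
    rw [this]
    nlinarith [sq_nonneg ((∫ ω, C ω ∂ℙ) - τ)]
  have hconc' : (ℙ A).toReal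
      ≤ 4 * Real.exp (-(n:ℝ) * α ^ 2 * ((p - p₀)/2) ^ 2 / 32) :=
    hconc _ (by linarith)
  have hexp : Real.exp (-(n:ℝ) * α ^ 2 * ((p - p₀)/2) ^ 2 / 32)
      = Real.exp (-(n:ℝ) * α ^ 2 * (p - p₀) ^ 2 / 128) := by
    congr 1; ring
  calc variance C ℙ ≤ 4 * τ ^ 2 * (ℙ A).toReal := hvar.trans hbound
    _ ≤ 4 * τ ^ 2 * (4 * Real.exp (-(n:ℝ) * α ^ 2 * (p - p₀) ^ 2 / 128)) := by
        rw [← hexp]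
        exact mul_le_mul_of_nonneg_left hconc' (by positivity)
    _ = (16 / ((n : ℝ) * α ^ 2)) *
        Real.exp (-(n : ℝ) * α ^ 2 * (p - p₀) ^ 2 / 128) := by
        rw [hτsq]; field_simp; ring
end

section
/- Let p ∈ [0,1]^d be a probability vector, p₀ ∈ [0,1]^d another probability vector, τ > 0, and define D_τ(p) = Σ_{j=1}^d |p(j)−p₀(j)| · min(τ, |p(j)−p₀(j)|). Then D_τ(p) ≥ min(‖p−p₀‖₂², τ ‖p−p₀‖₂). -/
open Real Finset

/-- For probability vectors `p, p₀` on `[d]` and `τ > 0`, the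
quantity `D_τ(p) = ∑_j |p j − p₀ j| min(τ, |p j − p₀ j|)` satisfies
`D_τ(p) ≥ min(‖p−p₀‖₂², τ‖p−p₀‖₂)`. -/
theorem stmt12 (d : ℕ) (τ : ℝ) (hτ : 0 < τ)
    (p p₀ : Fin d → ℝ)
    (hp0 : ∀ j, 0 ≤ p j) (hp1 : ∀ j, p j ≤ 1) (hps : ∑ j, p j = 1)
    (hq0 : ∀ j, 0 ≤ p₀ j) (hq1 : ∀ j, p₀ j ≤ 1) (hqs : ∑ j, p₀ j = 1) :
    ∑ j, |p j - p₀ j| * min τ |p j - p₀ j|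
      ≥ min (∑ j, (p j - p₀ j) ^ 2)
          (τ * Real.sqrt (∑ j, (p j - p₀ j) ^ 2)) := by
  set S : ℝ := ∑ j, (p j - p₀ j) ^ 2 with hS
  have hS0 : 0 ≤ S := Finset.sum_nonneg fun j _ => sq_nonneg _
  have hterm : ∀ j, (p j - p₀ j) ^ 2 ≤ S := fun j =>
    Finset.single_le_sum (fun i _ => sq_nonneg (p i - p₀ i)) (Finset.mem_univ j)
  have habs : ∀ j, |p j - p₀ j| ≤ Real.sqrt S := by
    intro j
    have := Real.sqrt_le_sqrt (hterm j)
    rwa [Real.sqrt_sq_eq_abs] at this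
  rcases le_or_gt (Real.sqrt S) τ with hc | hc
  · -- every coordinate small: LHS = S
    have : ∑ j, |p j - p₀ j| * min τ |p j - p₀ j| = S := by
      rw [hS]
      apply Finset.sum_congr rfl
      intro j _
      rw [min_eq_right ((habs j).trans hc), abs_mul_abs_self, sq]
    rw [this]
    exact min_le_left _ _
  · -- τ < √S
    have hSpos : 0 < Real.sqrt S := hτ.trans hc
    have key : ∀ j, (τ / Real.sqrt S) * (p j - p₀ j) ^ 2
        ≤ |p j - p₀ j| * min τ |p j - p₀ j| := by
      intro j
      rcases le_or_gt |p j - p₀ j| τ with h | h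
      · rw [min_eq_right h]
        rw [sq, ← abs_mul_abs_self]
        nlinarith [abs_nonneg (p j - p₀ j), habs j,
          div_le_one_of_le₀ hc.le hSpos.le, sq_nonneg (p j - p₀ j)]
      · rw [min_eq_left h.le]
        have h1 : (p j - p₀ j) ^ 2 = |p j - p₀ j| ^ 2 := (sq_abs _).symm
        rw [h1, div_mul_eq_mul_div, div_le_iff₀ hSpos]
        have h2 : |p j - p₀ j| * |p j - p₀ j| ≤ |p j - p₀ j| * Real.sqrt S :=
          mul_le_mul_of_nonneg_left (habs j) (abs_nonneg _)
        nlinarith [hτ.le, h2]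
    have hsum : (τ / Real.sqrt S) * S ≤ ∑ j, |p j - p₀ j| * min τ |p j - p₀ j| := by
      rw [hS, Finset.mul_sum]
      exact Finset.sum_le_sum fun j _ => key j
    have hS' : (τ / Real.sqrt S) * S = τ * Real.sqrt S := by
      field_simp
      nlinarith [Real.mul_self_sqrt hS0]
    exact le_trans (min_le_right _ _) (by rw [← hS']; exact hsum)
end

section
/- Let p₀(j) = c_d^{-1} j^{−1−β} for j = 1,…,d with β > 0 and normalizing constant c_d = Σ_{ℓ=1}^d ℓ^{−1−β}. For C = 2(1 − 2^{−β})^{−1/(β+3/4)} and any n, α with 1 ≤ nα² ≤ (d/C)^{2β+3/2}, setting j = ⌈C (nα²)^{1/(2β+3/2)}⌉, one has Σ_{ℓ=j+1}^d p₀(ℓ) ≤ j^{3/4}/(nα²)^{1/2}. -/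
open Real Finset

lemma perterm16 (β : ℝ) (hβ : 0 < β) (x : ℝ) (hx : 2 ≤ x) :
    x ^ (-(1 + β)) ≤ ((x - 1) ^ (-β) - x ^ (-β)) / β := by
  have hx0 : (0:ℝ) < x := by linarith
  have hx1 : (0:ℝ) < x - 1 := by linarith
  rw [le_div_iff₀ hβ]
  set t : ℝ := (x - 1) / x with ht
  have htpos : 0 < t := div_pos hx1 hx0
  have ht1 : 1 - t = 1 / x := by rw [ht]; field_simp; ring
  have hxt : x - 1 = x * t := by rw [ht]; field_simp
  have key : 1 + β * (1 - t) ≤ t ^ (-β) := by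
    rw [Real.rpow_def_of_pos htpos]
    have h1 : Real.log t ≤ t - 1 := Real.log_le_sub_one_of_pos htpos
    have h2 := Real.add_one_le_exp (Real.log t * (-β))
    nlinarith [mul_le_mul_of_nonneg_left h1 hβ.le]
  have hsplit : (x - 1) ^ (-β) - x ^ (-β) = x ^ (-β) * (t ^ (-β) - 1) := by
    rw [hxt, Real.mul_rpow hx0.le htpos.le]; ring
  have hxb : (0:ℝ) < x ^ (-β) := Real.rpow_pos_of_pos hx0 _
  have hxsplit : x ^ (-(1 + β)) = x ^ (-β) * (1 / x) := by
    rw [show -(1 + β) = -β + (-1) by ring, Real.rpow_add hx0, Real.rpow_neg_one]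
    ring
  rw [hsplit, hxsplit]
  have hβt : β * (1 - t) ≤ t ^ (-β) - 1 := by linarith
  calc x ^ (-β) * (1 / x) * β = x ^ (-β) * (β * (1 - t)) := by rw [ht1]; ring
    _ ≤ x ^ (-β) * (t ^ (-β) - 1) := mul_le_mul_of_nonneg_left hβt hxb.le

lemma tail16 (β : ℝ) (hβ : 0 < β) (j d : ℕ) (hj : 1 ≤ j) :
    ∑ ℓ ∈ Finset.Icc (j + 1) d, (ℓ : ℝ) ^ (-(1 + β)) ≤ (j : ℝ) ^ (-β) / β := by
  have hjpos : (0:ℝ) < (j:ℝ) := by exact_mod_cast hj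
  rcases le_or_gt d j with h | h
  · rw [Finset.Icc_eq_empty (by omega)]
    simp only [Finset.sum_empty]
    positivity
  · have key : ∀ m : ℕ, j ≤ m →
        ∑ ℓ ∈ Finset.Icc (j + 1) m, (ℓ : ℝ) ^ (-(1 + β))
          ≤ ((j : ℝ) ^ (-β) - (m : ℝ) ^ (-β)) / β := by
      intro m hm
      induction m, hm using Nat.le_induction with
      | base =>
        rw [Finset.Icc_eq_empty (by omega)]
        simp
      | succ m hm ih =>
        rw [Finset.sum_Icc_succ_top (by omega)]
        have hm1 : (1:ℝ) ≤ (m:ℝ) := by exact_mod_cast hj.trans hm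
        have hper := perterm16 β hβ ((m : ℝ) + 1) (by linarith)
        have hcast : ((m + 1 : ℕ) : ℝ) = (m : ℝ) + 1 := by push_cast; ring
        rw [hcast]
        have hsimp : ((m : ℝ) + 1 - 1) = (m : ℝ) := by ring
        rw [hsimp] at hper
        calc (∑ ℓ ∈ Finset.Icc (j + 1) m, (ℓ : ℝ) ^ (-(1 + β))) + ((m:ℝ)+1) ^ (-(1+β))
            ≤ ((j : ℝ) ^ (-β) - (m : ℝ) ^ (-β)) / β
              + ((m:ℝ) ^ (-β) - ((m:ℝ)+1) ^ (-β)) / β := add_le_add ih hper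
          _ = ((j : ℝ) ^ (-β) - ((m:ℝ)+1) ^ (-β)) / β := by ring
    have hd' := key d h.le
    have hdnn : (0:ℝ) ≤ (d : ℝ) ^ (-β) :=
      Real.rpow_nonneg (Nat.cast_nonneg d) _
    calc ∑ ℓ ∈ Finset.Icc (j + 1) d, (ℓ : ℝ) ^ (-(1 + β))
        ≤ ((j : ℝ) ^ (-β) - (d : ℝ) ^ (-β)) / β := hd'
      _ ≤ (j : ℝ) ^ (-β) / β := by gcongr <;> linarith

/-- For `p₀ ℓ ∝ ℓ^{−1−β}` on `[d]`, `C = 2(1−2^{−β})^{−1/(β+3/4)}`,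
and `1 ≤ nα² ≤ (d/C)^{2β+3/2}`, setting `j = ⌈C (nα²)^{1/(2β+3/2)}⌉`, the tail mass
satisfies `∑_{ℓ=j+1}^d p₀ ℓ ≤ j^{3/4}/(nα²)^{1/2}`. -/
theorem stmt16 (β : ℝ) (hβ : 0 < β) (d n : ℕ) (hd : 1 ≤ d) (α : ℝ) (hα : 0 < α)
    (C : ℝ) (hC : C = 2 * (1 - 2 ^ (-β)) ^ (-(1 / (β + 3 / 4))))
    (h1 : 1 ≤ (n : ℝ) * α ^ 2)
    (h2 : (n : ℝ) * α ^ 2 ≤ ((d : ℝ) / C) ^ (2 * β + 3 / 2))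
    (j : ℕ) (hj : j = ⌈C * ((n : ℝ) * α ^ 2) ^ (1 / (2 * β + 3 / 2))⌉₊) :
    ∑ ℓ ∈ Finset.Icc (j + 1) d,
        ((ℓ : ℝ) ^ (-(1 + β)) / ∑ ℓ' ∈ Finset.Icc 1 d, (ℓ' : ℝ) ^ (-(1 + β)))
      ≤ (j : ℝ) ^ ((3 : ℝ) / 4) / ((n : ℝ) * α ^ 2) ^ ((1 : ℝ) / 2) := by
  set A : ℝ := (n : ℝ) * α ^ 2 with hA
  have hA1 : (1:ℝ) ≤ A := h1
  have hApos : (0:ℝ) < A := by linarith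
  set D : ℝ := 1 - 2 ^ (-β) with hD
  have h2b : (0:ℝ) < (2:ℝ) ^ (-β) := Real.rpow_pos_of_pos two_pos _
  have h2b1 : (2:ℝ) ^ (-β) < 1 :=
    Real.rpow_lt_one_of_one_lt_of_neg one_lt_two (by linarith)
  have hDpos : 0 < D := by simp only [hD]; linarith
  -- D ≤ β since 1 - 2^{-β} ≤ β log 2 ≤ β
  have hDβ : D ≤ β := by
    have hlog2 : Real.log 2 < 1 := by
      have := Real.log_lt_sub_one_of_pos two_pos (by norm_num)
      linarith
    have hexp := Real.add_one_le_exp (-(β * Real.log 2))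
    have h2β : (2:ℝ) ^ (-β) = Real.exp (-(β * Real.log 2)) := by
      rw [Real.rpow_def_of_pos two_pos]; ring_nf
    simp only [hD, h2β]
    nlinarith [Real.log_pos (by norm_num : (1:ℝ) < 2)]
  have hCpos : 0 < C := by rw [hC]; positivity
  set s : ℝ := 1 / (2 * β + 3 / 2) with hs
  have hsA : (1:ℝ) ≤ A ^ s := Real.one_le_rpow hA1 (by positivity)
  have hjge : C * A ^ s ≤ (j : ℝ) := by rw [hj]; exact Nat.le_ceil _
  have hj1 : 1 ≤ j := by
    rw [hj, Nat.one_le_ceil_iff]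
    positivity
  have hjpos : (0:ℝ) < (j:ℝ) := by exact_mod_cast hj1
  have hb34 : (0:ℝ) < β + 3 / 4 := by linarith
  have hCpow : C ^ (β + 3/4) = 2 ^ (β + 3/4) / D := by
    rw [hC, Real.mul_rpow (by norm_num) (Real.rpow_nonneg hDpos.le _),
      ← Real.rpow_mul hDpos.le,
      show -(1 / (β + 3/4)) * (β + 3/4) = -1 by field_simp,
      Real.rpow_neg_one, div_eq_mul_inv]
    ring
  have hs2 : s * (β + 3/4) = 1/2 := by
    have hne : (2 * β + 3/2) ≠ 0 := by positivity
    rw [hs]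
    field_simp
    ring
  have hApow : (A ^ s) ^ (β + 3/4) = A ^ ((1:ℝ)/2) := by
    rw [← Real.rpow_mul hApos.le, hs2]
  have hkey : A ^ ((1:ℝ)/2) ≤ D * (j:ℝ) ^ (β + 3/4) := by
    have h1' : (C * A ^ s) ^ (β + 3/4) ≤ (j:ℝ) ^ (β + 3/4) :=
      Real.rpow_le_rpow (by positivity) hjge hb34.le
    rw [Real.mul_rpow hCpos.le (by positivity), hCpow, hApow] at h1'
    have h2pow : (1:ℝ) ≤ (2:ℝ) ^ (β + 3/4) :=
      Real.one_le_rpow one_le_two hb34.le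
    have hA2 : (0:ℝ) ≤ A ^ ((1:ℝ)/2) := by positivity
    calc A ^ ((1:ℝ)/2) ≤ 2 ^ (β + 3/4) * A ^ ((1:ℝ)/2) := by nlinarith
      _ = D * (2 ^ (β + 3/4) / D * A ^ ((1:ℝ)/2)) := by field_simp
      _ ≤ D * (j:ℝ) ^ (β + 3/4) := mul_le_mul_of_nonneg_left h1' hDpos.le
  set cd : ℝ := ∑ ℓ' ∈ Finset.Icc 1 d, (ℓ' : ℝ) ^ (-(1 + β)) with hcd
  have hcd1 : (1:ℝ) ≤ cd := by
    rw [hcd]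
    have hmem : (1:ℕ) ∈ Finset.Icc 1 d := by simp [hd]
    have := Finset.single_le_sum (f := fun ℓ' : ℕ => (ℓ' : ℝ) ^ (-(1 + β)))
      (fun i _ => Real.rpow_nonneg (Nat.cast_nonneg i) _) hmem
    simpa using this
  have htail := tail16 β hβ j d hj1
  have hsum_nonneg : (0:ℝ) ≤ ∑ ℓ ∈ Finset.Icc (j + 1) d, (ℓ : ℝ) ^ (-(1 + β)) :=
    Finset.sum_nonneg fun i _ => Real.rpow_nonneg (Nat.cast_nonneg i) _
  rw [← Finset.sum_div]
  have hjbnn : (0:ℝ) ≤ (j:ℝ) ^ (-β) := Real.rpow_nonneg hjpos.le _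
  have hA12 : (0:ℝ) < A ^ ((1:ℝ)/2) := Real.rpow_pos_of_pos hApos _
  calc (∑ ℓ ∈ Finset.Icc (j + 1) d, (ℓ : ℝ) ^ (-(1 + β))) / cd
      ≤ ∑ ℓ ∈ Finset.Icc (j + 1) d, (ℓ : ℝ) ^ (-(1 + β)) :=
        div_le_self hsum_nonneg hcd1
    _ ≤ (j:ℝ) ^ (-β) / β := htail
    _ ≤ (j:ℝ) ^ (-β) / D := by gcongr
    _ ≤ (j : ℝ) ^ ((3 : ℝ) / 4) / A ^ ((1:ℝ)/2) := by
        rw [div_le_div_iff₀ hDpos hA12]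
        have := mul_le_mul_of_nonneg_left hkey hjbnn
        calc (j:ℝ) ^ (-β) * A ^ ((1:ℝ)/2)
            ≤ (j:ℝ) ^ (-β) * (D * (j:ℝ) ^ (β + 3/4)) := this
          _ = ((j:ℝ) ^ (-β) * (j:ℝ) ^ (β + 3/4)) * D := by ring
          _ = (j:ℝ) ^ ((3:ℝ)/4) * D := by
              rw [← Real.rpow_add hjpos]
              norm_num
end
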